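/- arXiv:2002.03511 — 12 statements merged into one kernel-verified Lean document; each statement's English description precedes it below -/
import Mathlib

section
/- Let A₀ be a commutative ring and I₀ ⊆ A₀ a finitely generated ideal. Let f₀ : N₀ → M₀ be an injective homomorphism of A₀-modules whose cokernel is annihilated by I₀^m for some m ≥ 0. Then the induced map f̂₀ : N̂₀ → M̂₀ between I₀-adic completions is injective, and its cokernel is annihilated by I₀^m·Â₀ (in particular by I₀^m). -/
private lemma stmt3_aux {A₀ : Type*} [CommRing A₀] (I₀ : Ideal A₀)
    {N₀ M₀ : Type*} [AddCommGroup N₀] [AddCommGroup M₀] [Module A₀ N₀] [Module A₀ M₀]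
    (f₀ : N₀ →ₗ[A₀] M₀) (hinj : Function.Injective f₀) (m : ℕ)
    (hrange : (I₀ ^ m • ⊤ : Submodule A₀ M₀) ≤ LinearMap.range f₀)
    {n : ℕ} {x : N₀}
    (hx : f₀ x ∈ (I₀ ^ n • (I₀ ^ m • ⊤ : Submodule A₀ M₀))) :
    x ∈ (I₀ ^ n • ⊤ : Submodule A₀ N₀) := by
  have hmem : f₀ x ∈ Submodule.map f₀ (I₀ ^ n • ⊤ : Submodule A₀ N₀) := by
    rw [Submodule.map_smul'', Submodule.map_top]
    exact Submodule.smul_mono le_rfl hrange hx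
  obtain ⟨z, hz, hzx⟩ := hmem
  rwa [← hinj hzx]

/-- Let `A₀` be a commutative ring and `I₀ ⊆ A₀` a finitely generated
ideal.  Let `f₀ : N₀ → M₀` be an injective homomorphism of `A₀`-modules whose
cokernel is annihilated by `I₀ ^ m` for some `m ≥ 0`.  Then the induced map
between `I₀`-adic completions is injective, and its cokernel is annihilated by
`I₀ ^ m · Â₀` (in particular by `I₀ ^ m`). -/
theorem stmt3 {A₀ : Type*} [CommRing A₀] (I₀ : Ideal A₀) (hfg : I₀.FG)
    {N₀ M₀ : Type*} [AddCommGroup N₀] [AddCommGroup M₀] [Module A₀ N₀] [Module A₀ M₀]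
    (f₀ : N₀ →ₗ[A₀] M₀) (hinj : Function.Injective f₀)
    (m : ℕ) (hcoker : ∀ c ∈ I₀ ^ m, ∀ y : M₀, ∃ x : N₀, f₀ x = c • y) :
    Function.Injective (AdicCompletion.map I₀ f₀) ∧
      ∀ c ∈ (I₀ ^ m).map (algebraMap A₀ (AdicCompletion I₀ A₀)),
        ∀ y : AdicCompletion I₀ M₀, ∃ x : AdicCompletion I₀ N₀,
          AdicCompletion.map I₀ f₀ x = c • y := by
  have hrange : (I₀ ^ m • ⊤ : Submodule A₀ M₀) ≤ LinearMap.range f₀ := by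
    refine Submodule.smul_le.mpr fun c hc y _ ↦ ?_
    obtain ⟨x, hx⟩ := hcoker c hc y
    exact ⟨x, hx⟩
  constructor
  · rw [← LinearMap.ker_eq_bot, LinearMap.ker_eq_bot']
    intro x
    apply AdicCompletion.induction_on I₀ N₀ x (fun a ↦ ?_)
    intro hx
    refine AdicCompletion.mk_zero_of _ _ _ ⟨0, fun n _ ↦ ⟨n + m, by omega, n, by omega, ?_⟩⟩
    have hmem : f₀ (a (n + m)) ∈ (I₀ ^ (n + m) • ⊤ : Submodule A₀ M₀) := by
      simpa using congrArg (fun z ↦ z.val (n + m)) hx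
    rw [pow_add, mul_smul] at hmem
    exact stmt3_aux I₀ f₀ hinj m hrange hmem
  · let S : Ideal (AdicCompletion I₀ A₀) :=
      { carrier := {c | ∀ y : AdicCompletion I₀ M₀, ∃ x : AdicCompletion I₀ N₀,
          AdicCompletion.map I₀ f₀ x = c • y}
        add_mem' := by
          intro c d hc hd y
          obtain ⟨x1, h1⟩ := hc y
          obtain ⟨x2, h2⟩ := hd y
          exact ⟨x1 + x2, by simp [h1, h2, add_smul]⟩
        zero_mem' := fun y ↦ ⟨0, by simp⟩
        smul_mem' := by
          intro r c hc y
          obtain ⟨x, h⟩ := hc y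
          exact ⟨r • x, by simp [h, smul_eq_mul, mul_smul]⟩ }
    have hS : (I₀ ^ m).map (algebraMap A₀ (AdicCompletion I₀ A₀)) ≤ S := by
      rw [Ideal.map_le_iff_le_comap]
      intro a ha
      intro y
      apply AdicCompletion.induction_on I₀ M₀ y (fun b ↦ ?_)
      choose x hxx using fun n ↦ hcoker a ha (b n)
      have hcauchy : AdicCompletion.IsAdicCauchy I₀ N₀ x := by
        intro k n hkn
        rw [SModEq.sub_mem]
        have hb : b k - b n ∈ (I₀ ^ k • ⊤ : Submodule A₀ M₀) :=
          SModEq.sub_mem.mp (b.property hkn)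
        have : f₀ (x k - x n) ∈ (I₀ ^ k • (I₀ ^ m • ⊤ : Submodule A₀ M₀)) := by
          rw [map_sub, hxx, hxx, ← smul_sub]
          rw [← mul_smul, mul_comm, mul_smul]
          exact Submodule.smul_mem_smul ha hb
        exact stmt3_aux I₀ f₀ hinj m hrange this
      refine ⟨AdicCompletion.mk I₀ N₀ (⟨x, @hcauchy⟩ : AdicCompletion.AdicCauchySequence I₀ N₀), ?_⟩
      erw [AdicCompletion.map_mk]
      rw [algebraMap_smul, ← map_smul]
      congr 1
      exact AdicCompletion.AdicCauchySequence.ext fun n ↦ by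
        simp only [AdicCompletion.AdicCauchySequence.smul_apply]
        exact hxx n
    exact fun c hc y ↦ hS hc y
end

section
/- Let A₀ be a commutative ring with a nonzerodivisor t. Put A := A₀[1/t], A' := Â₀[1/t] (where Â₀ is the t-adic completion of A₀), and A⁺ := (A₀)⁺_A, the integral closure of A₀ in A. Let c ≥ 0 be an integer. Then t^c·A⁺ ⊆ A₀ holds if and only if t^c·(Â₀)⁺_{A'} ⊆ Â₀ holds, where (Â₀)⁺_{A'} is the integral closure of Â₀ in A'. Moreover, if these conditions hold, then the inclusion A₀ ↪ A⁺ induces an isomorphism A' ≅ (A⁺)^∧[1/t] (where (A⁺)^∧ is the t-adic completion of A⁺) whose restriction yields an isomorphism (Â₀)⁺_{A'} ≅ (A⁺)^∧. -/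
/-- `ι : R →+* C` realizes `C` as the `t`-adic completion of `R`:
`C` is `(ι t)`-adically complete (and separated), every element of `C` is
congruent to an element of `R` modulo each `(ι t)ⁿ·C`, and `ι` induces
injections `R/tⁿ → C/(ι t)ⁿ` for all `n`. -/
def IsAdicCompletionMap {R C : Type*} [CommRing R] [CommRing C]
    (t : R) (ι : R →+* C) : Prop :=
  IsAdicComplete (Ideal.span {ι t}) C ∧
  (∀ n : ℕ, ∀ c : C, ∃ a : R, c - ι a ∈ Ideal.span {ι t} ^ n) ∧
  (∀ n : ℕ, ∀ a : R, ι a ∈ Ideal.span {ι t} ^ n → a ∈ Ideal.span {t} ^ n)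

open Polynomial

section Helpers
variable {R S : Type*} [CommRing R] [CommRing S] {t : R} {ι : R →+* S}

lemma acm_dense (h : IsAdicCompletionMap t ι) (n : ℕ) (x : S) :
    ∃ a : R, ∃ s : S, x = ι a + (ι t) ^ n * s := by
  obtain ⟨a, ha⟩ := h.2.1 n x
  rw [Ideal.span_singleton_pow, Ideal.mem_span_singleton] at ha
  obtain ⟨s, hs⟩ := ha
  exact ⟨a, s, by linear_combination hs⟩

lemma acm_inj (h : IsAdicCompletionMap t ι) {n : ℕ} {a : R} (hn : ι a ∈ Ideal.span {ι t} ^ n) :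
    ∃ b : R, a = t ^ n * b := by
  have := h.2.2 n a hn
  rw [Ideal.span_singleton_pow, Ideal.mem_span_singleton] at this
  obtain ⟨b, hb⟩ := this
  exact ⟨b, hb⟩

lemma acm_haus (h : IsAdicCompletionMap t ι) {x : S}
    (hx : ∀ n : ℕ, x ∈ Ideal.span {ι t} ^ n) : x = 0 := by
  haveI := h.1
  refine IsHausdorff.haus (I := Ideal.span {ι t}) (inferInstance) x (fun n => ?_)
  rw [SModEq.zero]
  simpa using hx n

lemma acm_nzd (ht : t ∈ nonZeroDivisors R) (h : IsAdicCompletionMap t ι) :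
    ι t ∈ nonZeroDivisors S := by
  rw [mem_nonZeroDivisors_iff_right]
  intro x hx
  refine acm_haus h (fun n => ?_)
  obtain ⟨a, s, rfl⟩ := acm_dense h n x
  have h1 : ι (t * a) ∈ Ideal.span {ι t} ^ (n + 1) := by
    rw [Ideal.span_singleton_pow, Ideal.mem_span_singleton]
    refine ⟨-s, ?_⟩
    rw [map_mul]
    linear_combination hx
  obtain ⟨b, hb⟩ := acm_inj h h1
  have hab : a = t ^ n * b := by
    have h2 : (a - t ^ n * b) * t = 0 := by linear_combination hb
    have := (mem_nonZeroDivisors_iff_right.mp ht) _ h2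
    linear_combination this
  rw [Ideal.span_singleton_pow, Ideal.mem_span_singleton]
  refine ⟨ι b + s, ?_⟩
  rw [hab, map_mul, map_pow]
  ring

end Helpers

section Fwd
variable {A₀ A C A' : Type*} [CommRing A₀] [CommRing A] [CommRing C] [CommRing A']
  [Algebra A₀ A] [Algebra A₀ C] [Algebra C A']

lemma fwd (t : A₀) (ht : t ∈ nonZeroDivisors A₀)
    [IsLocalization.Away t A]
    (hC : IsAdicCompletionMap t (algebraMap A₀ C))
    [IsLocalization.Away (algebraMap A₀ C t) A']
    (c : ℕ)
    (H : ∀ x ∈ integralClosure A₀ A, algebraMap A₀ A t ^ c * x ∈ (algebraMap A₀ A).range) :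
    ∀ y ∈ integralClosure C A',
      algebraMap C A' (algebraMap A₀ C t) ^ c * y ∈ (algebraMap C A').range := by
  rcases subsingleton_or_nontrivial A₀ with hA | hA
  · haveI : Subsingleton A' := by
      have h1 : (1 : C) = 0 := by
        calc (1:C) = algebraMap A₀ C 1 := (map_one _).symm
        _ = algebraMap A₀ C 0 := by rw [Subsingleton.elim (1:A₀) 0]
        _ = 0 := map_zero _
      have h2 : (1 : A') = 0 := by
        calc (1:A') = algebraMap C A' 1 := (map_one _).symm
        _ = 0 := by rw [h1, map_zero]
      exact subsingleton_of_zero_eq_one h2.symm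
    exact fun y _ => ⟨0, Subsingleton.elim _ _⟩
  intro y hy
  set ι := algebraMap A₀ C with hι
  set ι' := algebraMap C A' with hι'
  set ιA := algebraMap A₀ A with hιA
  set τ := ι t with hτ
  have τnzd : τ ∈ nonZeroDivisors C := acm_nzd ht hC
  have hpow : Submonoid.powers τ ≤ nonZeroDivisors C := Submonoid.powers_le.mpr τnzd
  have hpow₀ : Submonoid.powers t ≤ nonZeroDivisors A₀ := Submonoid.powers_le.mpr ht
  have injC : Function.Injective ι' := IsLocalization.injective A' hpow
  have injA : Function.Injective ιA := IsLocalization.injective A hpow₀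
  have hτu : IsUnit (ι' τ) :=
    IsLocalization.map_units A' (⟨τ, Submonoid.mem_powers τ⟩ : Submonoid.powers τ)
  have htu : IsUnit (ιA t) :=
    IsLocalization.map_units A (⟨t, Submonoid.mem_powers t⟩ : Submonoid.powers t)
  obtain ⟨q, hq1, hq2⟩ := hy
  set n := q.natDegree with hn
  by_cases hn0 : n = 0
  · -- q = 1, so A' is trivial
    have hq1' : q = 1 := hq1.natDegree_eq_zero.mp (by rw [← hn]; exact hn0)
    rw [hq1', Polynomial.eval₂_one] at hq2
    haveI : Subsingleton A' := subsingleton_of_zero_eq_one hq2.symm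
    exact ⟨0, Subsingleton.elim _ _⟩
  -- get numerator
  obtain ⟨⟨x, s⟩, hxy⟩ := IsLocalization.surj (Submonoid.powers τ) y
  obtain ⟨m, hm⟩ := s.2
  have hm' : τ ^ m = (s : C) := hm
  have hxy' : y * ι' (τ ^ m) = ι' x := by rw [hm']; exact hxy
  -- scaled polynomial over C kills x
  have hQx : (q.scaleRoots (τ ^ m)).eval x = 0 := by
    apply injC
    rw [map_zero, ← eval₂_at_apply]
    have h0 := scaleRoots_eval₂_mul (p := q) ι' y (τ ^ m)
    rw [hq2, mul_zero] at h0
    have h2 : ι' x = ι' (τ ^ m) * y := by rw [← hxy']; ring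
    rw [h2]
    exact h0
  obtain ⟨a, s₀, hx⟩ := acm_dense hC (m * n + m + c + 1) x
  have hcoe : ∀ i : ℕ, ∃ b s, q.coeff i = ι b + τ ^ (m * n + m + c + 1) * s :=
    fun i => acm_dense hC (m * n + m + c + 1) _
  choose b sb hsb using hcoe
  -- the approximating monic polynomial over A₀
  set p : A₀[X] := X ^ n + ∑ i ∈ Finset.range n, Polynomial.C (b i) * X ^ i with hp
  have hdeg : (∑ i ∈ Finset.range n, Polynomial.C (b i) * X ^ i).degree < (n : WithBot ℕ) := by
    refine lt_of_le_of_lt (Polynomial.degree_sum_le _ _) ?_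
    rw [Finset.sup_lt_iff (by exact_mod_cast WithBot.bot_lt_coe n)]
    intro i hi
    exact lt_of_le_of_lt (Polynomial.degree_C_mul_X_pow_le _ _)
      (by exact_mod_cast Finset.mem_range.mp hi)
  have hpm : p.Monic := Polynomial.monic_X_pow_add hdeg
  have hpdeg : p.degree = (n : ℕ) := by
    rw [hp, add_comm, Polynomial.degree_add_eq_right_of_degree_lt]
    · exact Polynomial.degree_X_pow n
    · rw [Polynomial.degree_X_pow]; exact hdeg
  have hpn : p.natDegree = n := Polynomial.natDegree_eq_of_degree_eq_some hpdeg
  -- coefficients of p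
  have hpcoeff : ∀ i, i < n → p.coeff i = b i := by
    intro i hi
    rw [hp, Polynomial.coeff_add, Polynomial.coeff_X_pow, if_neg (Nat.ne_of_lt hi),
      Polynomial.finset_sum_coeff]
    rw [Finset.sum_eq_single i]
    · simp
    · intro j _ hji
      rw [Polynomial.coeff_C_mul, Polynomial.coeff_X_pow, if_neg (fun h => hji h.symm), mul_zero]
    · intro h; exact absurd (Finset.mem_range.mpr hi) h
  have hpcoeffn : p.coeff n = 1 := by rw [← hpn]; exact hpm.coeff_natDegree
  set J : Ideal C := Ideal.span {τ} ^ (m * n + m + c + 1) with hJ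
  set π : C →+* C ⧸ J := Ideal.Quotient.mk J with hπ
  have hπτ : π (τ ^ (m * n + m + c + 1)) = 0 := by
    rw [hπ, Ideal.Quotient.eq_zero_iff_mem, hJ, Ideal.span_singleton_pow]
    exact Ideal.subset_span rfl
  have hcomp : ∀ r : A₀, ∀ k : ℕ, (π.comp ι) (r ^ k) = π ((ι r) ^ k) := by
    intro r k; rw [RingHom.comp_apply, map_pow, map_pow]
  have hmap : (p.scaleRoots (t ^ m)).map (π.comp ι) = (q.scaleRoots (τ ^ m)).map π := by
    ext i
    rw [Polynomial.coeff_map, Polynomial.coeff_map, coeff_scaleRoots, coeff_scaleRoots,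
      hpn, ← hn]
    rcases lt_trichotomy i n with hi | hi | hi
    · have h1 : π (q.coeff i) = (π.comp ι) (p.coeff i) := by
        rw [hpcoeff i hi, hsb i, map_add, map_mul, hπτ, zero_mul, add_zero, RingHom.comp_apply]
      rw [map_mul, map_mul, h1]
      congr 1
      rw [map_pow, map_pow, RingHom.comp_apply, map_pow, ← hτ, map_pow]
    · rw [hi]
      have h2 : q.coeff n = 1 := hq1.coeff_natDegree
      rw [Nat.sub_self, pow_zero, pow_zero, mul_one, mul_one, hpcoeffn, h2, map_one, map_one]
    · have h3 : p.coeff i = 0 := Polynomial.coeff_eq_zero_of_natDegree_lt (hpn ▸ hi)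
      have h4 : q.coeff i = 0 := Polynomial.coeff_eq_zero_of_natDegree_lt (by rw [← hn]; exact hi)
      rw [h3, h4, zero_mul, zero_mul, map_zero, map_zero]
  have hπx : π x = (π.comp ι) a := by
    rw [hx, map_add, map_mul]
    have : (ι t : C) ^ (m * n + m + c + 1) = τ ^ (m * n + m + c + 1) := rfl
    rw [this, hπτ, zero_mul, add_zero, RingHom.comp_apply]
  have hkey : π (ι ((p.scaleRoots (t ^ m)).eval a)) = 0 := by
    have e1 : π (ι ((p.scaleRoots (t ^ m)).eval a)) =
        ((p.scaleRoots (t ^ m)).map (π.comp ι)).eval ((π.comp ι) a) := by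
      rw [Polynomial.eval_map, Polynomial.eval₂_at_apply, RingHom.comp_apply]
    rw [e1, hmap, ← hπx, Polynomial.eval_map, Polynomial.eval₂_at_apply, hQx, map_zero]
  have hmem : ι ((p.scaleRoots (t ^ m)).eval a) ∈ J := by
    rw [← Ideal.Quotient.eq_zero_iff_mem]; exact hkey
  obtain ⟨e, he⟩ := acm_inj hC (hJ ▸ hmem)
  -- pass to A
  set z : A := ιA a * (IsLocalization.Away.invSelf t) ^ m with hz
  have hz1 : ιA (t ^ m) * z = ιA a := by
    rw [hz, map_pow]
    calc ιA t ^ m * (ιA a * IsLocalization.Away.invSelf t ^ m)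
        = ιA a * (ιA t * IsLocalization.Away.invSelf t) ^ m := by ring
      _ = ιA a := by rw [IsLocalization.Away.mul_invSelf, one_pow, mul_one]
  have hsr := scaleRoots_eval₂_mul (p := p) ιA z (t ^ m)
  rw [hz1, Polynomial.eval₂_at_apply, he, hpn] at hsr
  -- hsr : ιA (t ^ (m*n+m+c+1) * e) = ιA (t ^ m) ^ n * eval₂ ιA z p
  have hev : eval₂ ιA z p = ιA (t ^ (m + c + 1) * e) := by
    have hu : IsUnit (ιA (t ^ m) ^ n) := by rw [map_pow]; exact (htu.pow m).pow n
    refine hu.mul_left_cancel ?_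
    rw [← hsr, ← map_pow, ← map_mul]
    congr 1
    ring
  have hzint : z ∈ integralClosure A₀ A := by
    refine ⟨p - Polynomial.C (t ^ (m + c + 1) * e), ?_, ?_⟩
    · have hrw : p - Polynomial.C (t ^ (m + c + 1) * e) =
          X ^ n + (∑ i ∈ Finset.range n, Polynomial.C (b i) * X ^ i
            - Polynomial.C (t ^ (m + c + 1) * e)) := by
        rw [hp]; ring
      rw [hrw]
      apply Polynomial.monic_X_pow_add ?_
      refine lt_of_le_of_lt (Polynomial.degree_sub_le _ _) ?_
      rw [max_lt_iff]
      refine ⟨hdeg, lt_of_le_of_lt Polynomial.degree_C_le ?_⟩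
      exact_mod_cast Nat.pos_of_ne_zero hn0
    · rw [Polynomial.eval₂_sub, hev, Polynomial.eval₂_C, sub_self]
  obtain ⟨a', ha'⟩ := H z hzint
  have hta : t ^ c * a = t ^ m * a' := by
    apply injA
    rw [map_mul, map_mul, map_pow, map_pow, ha', ← hz1, map_pow]
    ring
  refine ⟨ι a' + τ ^ (m * n + 2 * c + 1) * s₀, ?_⟩
  have hu' : IsUnit (ι' (τ ^ m)) := by rw [map_pow]; exact hτu.pow m
  apply hu'.mul_left_cancel
  rw [← map_mul]
  have h5 : ι' (τ ^ m) * (ι' τ ^ c * y) = ι' (τ ^ c) * ι' x := by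
    rw [← hxy', map_pow, map_pow]; ring
  rw [h5, ← map_mul]
  congr 1
  rw [hx]
  have h6 : ι (t ^ c * a) = ι (t ^ m * a') := by rw [hta]
  rw [map_mul, map_mul, map_pow, map_pow] at h6
  have hττ : (ι t : C) = τ := rfl
  rw [hττ] at h6
  -- h6 : τ ^ c * ι a = τ ^ m * ι a'
  rw [hττ]
  linear_combination -h6

end Fwd

/-- Let `A₀` be a commutative ring with a nonzerodivisor `t`;
`A := A₀[1/t]`; `C := Â₀` the `t`-adic completion; `A' := Â₀[1/t]`;
`A⁺ := (A₀)⁺_A` the integral closure of `A₀` in `A`; `D := (A⁺)^∧` the `t`-adic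
completion of `A⁺`; and `E := (A⁺)^∧[1/t]`.  Then for `c ≥ 0`:
`t^c·A⁺ ⊆ A₀` holds iff `t^c·(Â₀)⁺_{A'} ⊆ Â₀` holds.  Moreover, if these
conditions hold, then the map `θ : A' → E` induced by the inclusion
`A₀ ↪ A⁺` (i.e. the localization of the induced map `g : Â₀ → (A⁺)^∧` on
completions) is a ring isomorphism whose restriction maps `(Â₀)⁺_{A'}`
isomorphically onto `(A⁺)^∧`. -/
theorem stmt4 {A₀ A C A' D E : Type*}
    [CommRing A₀] [CommRing A] [CommRing C] [CommRing A'] [CommRing D] [CommRing E]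
    [Algebra A₀ A] [Algebra A₀ C] [Algebra C A']
    [Algebra (integralClosure A₀ A) D] [Algebra D E]
    (t : A₀) (ht : t ∈ nonZeroDivisors A₀)
    [IsLocalization.Away t A]
    (hC : IsAdicCompletionMap t (algebraMap A₀ C))
    [IsLocalization.Away (algebraMap A₀ C t) A']
    (hD : IsAdicCompletionMap
      (⟨algebraMap A₀ A t, isIntegral_algebraMap⟩ : integralClosure A₀ A)
      (algebraMap (integralClosure A₀ A) D))
    [IsLocalization.Away
      (algebraMap (integralClosure A₀ A) D
        (⟨algebraMap A₀ A t, isIntegral_algebraMap⟩ : integralClosure A₀ A)) E]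
    (c : ℕ) :
    ((∀ x ∈ integralClosure A₀ A,
        algebraMap A₀ A t ^ c * x ∈ (algebraMap A₀ A).range) ↔
      (∀ y ∈ integralClosure C A',
        algebraMap C A' (algebraMap A₀ C t) ^ c * y ∈ (algebraMap C A').range)) ∧
    ((∀ x ∈ integralClosure A₀ A,
        algebraMap A₀ A t ^ c * x ∈ (algebraMap A₀ A).range) →
      ∀ g : C →+* D, (∀ a : A₀, g (algebraMap A₀ C a) =
          algebraMap (integralClosure A₀ A) D
            (⟨algebraMap A₀ A a, isIntegral_algebraMap⟩ : integralClosure A₀ A)) →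
      ∀ θ : A' →+* E, (∀ x : C, θ (algebraMap C A' x) = algebraMap D E (g x)) →
        Function.Bijective θ ∧
          θ '' (integralClosure C A' : Set A') = Set.range (algebraMap D E)) := by
  -- common preliminaries
  have hτnzd : algebraMap A₀ C t ∈ nonZeroDivisors C := acm_nzd ht hC
  have hpowC : Submonoid.powers (algebraMap A₀ C t) ≤ nonZeroDivisors C :=
    Submonoid.powers_le.mpr hτnzd
  have hpowA : Submonoid.powers t ≤ nonZeroDivisors A₀ := Submonoid.powers_le.mpr ht
  have injC' : Function.Injective (algebraMap C A') := IsLocalization.injective A' hpowC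
  have injA : Function.Injective (algebraMap A₀ A) := IsLocalization.injective A hpowA
  have htu : IsUnit (algebraMap A₀ A t) :=
    IsLocalization.map_units A ⟨t, Submonoid.mem_powers t⟩
  have hτu : IsUnit (algebraMap C A' (algebraMap A₀ C t)) :=
    IsLocalization.map_units A' ⟨_, Submonoid.mem_powers _⟩
  have hg : ∀ (y : Submonoid.powers t),
      IsUnit (((algebraMap C A').comp (algebraMap A₀ C)) (y : A₀)) := by
    rintro ⟨_, k, rfl⟩
    rw [RingHom.comp_apply, map_pow, map_pow]
    exact hτu.pow k
  let f : A →+* A' := IsLocalization.lift (S := A) hg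
  have hf : ∀ r : A₀, f (algebraMap A₀ A r) = algebraMap C A' (algebraMap A₀ C r) :=
    fun r => IsLocalization.lift_eq hg r
  have hfint : ∀ x : A, x ∈ integralClosure A₀ A → f x ∈ integralClosure C A' := by
    intro x hx
    obtain ⟨px, hpx1, hpx2⟩ := hx
    refine ⟨px.map (algebraMap A₀ C), hpx1.map _, ?_⟩
    rw [Polynomial.eval₂_map]
    have hcmp : (algebraMap C A').comp (algebraMap A₀ C) = f.comp (algebraMap A₀ A) := by
      ext r; rw [RingHom.comp_apply, RingHom.comp_apply, hf]
    rw [hcmp, ← Polynomial.hom_eval₂, hpx2, map_zero]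
  constructor
  · constructor
    · exact fun H => fwd t ht hC c H
    · intro H x hx
      obtain ⟨z, hz⟩ := H (f x) (hfint x hx)
      obtain ⟨⟨aa, s⟩, hxa⟩ := IsLocalization.surj (Submonoid.powers t) x
      obtain ⟨m, hm⟩ := s.2
      have hm' : t ^ m = (s : A₀) := hm
      have hxa' : x * algebraMap A₀ A (t ^ m) = algebraMap A₀ A aa := by
        rw [hm']; exact hxa
      have e1 : f x * algebraMap C A' (algebraMap A₀ C (t ^ m))
          = algebraMap C A' (algebraMap A₀ C aa) := by
        rw [← hf, ← hf, ← map_mul]; exact congrArg f hxa'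
      have hzz : algebraMap A₀ C t ^ m * z = algebraMap A₀ C (t ^ c * aa) := by
        apply injC'
        simp only [map_mul, map_pow]
        rw [hz, ← e1]
        simp only [map_mul, map_pow]
        ring
      obtain ⟨bb, s₁, hbb⟩ := acm_dense hC (m + 1) z
      have hmem : algebraMap A₀ C (t ^ c * aa - t ^ m * bb)
          ∈ Ideal.span {algebraMap A₀ C t} ^ (m + 1) := by
        rw [Ideal.span_singleton_pow, Ideal.mem_span_singleton]
        refine ⟨algebraMap A₀ C t ^ m * s₁, ?_⟩
        rw [map_sub, ← hzz, hbb, map_mul, map_pow]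
        ring
      obtain ⟨ee, hee⟩ := acm_inj hC hmem
      refine ⟨bb + t * ee, ?_⟩
      have h8 : t ^ c * aa = t ^ m * (bb + t * ee) := by linear_combination hee
      have hu : IsUnit (algebraMap A₀ A (t ^ m)) := by rw [map_pow]; exact htu.pow m
      apply hu.mul_left_cancel
      calc algebraMap A₀ A (t ^ m) * algebraMap A₀ A (bb + t * ee)
          = algebraMap A₀ A (t ^ m * (bb + t * ee)) := by rw [map_mul]
        _ = algebraMap A₀ A (t ^ c * aa) := by rw [h8]
        _ = algebraMap A₀ A (t ^ c) * (x * algebraMap A₀ A (t ^ m)) := by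
            rw [map_mul, hxa']
        _ = algebraMap A₀ A (t ^ m) * (algebraMap A₀ A t ^ c * x) := by
            rw [map_pow]; ring
  · intro Hc g hgcompat θ hθ
    set tp : integralClosure A₀ A := ⟨algebraMap A₀ A t, isIntegral_algebraMap⟩ with htp
    have hvalpow : ∀ (u : integralClosure A₀ A) (k : ℕ),
        ((u ^ k : integralClosure A₀ A) : A) = (u : A) ^ k :=
      fun u k => SubmonoidClass.coe_pow u k
    have ht'nzd : tp ∈ nonZeroDivisors (integralClosure A₀ A) := by
      rw [mem_nonZeroDivisors_iff_right]
      intro u hu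
      have h1 : (u : A) * algebraMap A₀ A t = 0 := congrArg Subtype.val hu
      have h2 : (u : A) = 0 := htu.mul_right_cancel (by rw [zero_mul]; exact h1)
      exact Subtype.ext h2
    haveI hlocA : IsLocalization.Away tp A := by
      refine ⟨?_, ?_, ?_⟩
      · rintro ⟨u, k, rfl⟩
        have h1 : algebraMap (integralClosure A₀ A) A (tp ^ k) = algebraMap A₀ A t ^ k :=
          hvalpow tp k
        rw [h1]
        exact htu.pow k
      · intro zz
        obtain ⟨⟨aa, s⟩, hxa⟩ := IsLocalization.surj (Submonoid.powers t) zz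
        obtain ⟨m, hm⟩ := s.2
        have hm' : t ^ m = (s : A₀) := hm
        refine ⟨⟨⟨algebraMap A₀ A aa, isIntegral_algebraMap⟩, ⟨tp ^ m, ⟨m, rfl⟩⟩⟩, ?_⟩
        show zz * ((tp ^ m : integralClosure A₀ A) : A) = algebraMap A₀ A aa
        rw [hvalpow tp m]
        show zz * algebraMap A₀ A t ^ m = algebraMap A₀ A aa
        rw [← map_pow, hm']
        exact hxa
      · intro x y hxy
        have h1 : x = y := Subtype.ext hxy
        exact ⟨1, by rw [h1]⟩
    have H0 : ∀ x ∈ integralClosure (integralClosure A₀ A) A,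
        algebraMap (integralClosure A₀ A) A tp ^ 0 * x
          ∈ (algebraMap (integralClosure A₀ A) A).range := by
      intro x hx
      rw [pow_zero, one_mul]
      exact ⟨⟨x, isIntegral_trans x hx⟩, rfl⟩
    have Hfwd := fwd (A' := E) tp ht'nzd hD 0 H0
    set ιD := algebraMap (integralClosure A₀ A) D with hιD
    set tD := ιD tp with htDdef
    set ιE := algebraMap D E with hιE
    have htDnzd : tD ∈ nonZeroDivisors D := acm_nzd ht'nzd hD
    have hpowD : Submonoid.powers tD ≤ nonZeroDivisors D := Submonoid.powers_le.mpr htDnzd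
    have injDE : Function.Injective ιE := IsLocalization.injective E hpowD
    have hEtu : IsUnit (ιE tD) := IsLocalization.map_units E ⟨tD, Submonoid.mem_powers _⟩
    have halg : ∀ a : A₀, (⟨algebraMap A₀ A a, isIntegral_algebraMap⟩ : integralClosure A₀ A)
        = algebraMap A₀ (integralClosure A₀ A) a := fun a => rfl
    have htpa : tp = algebraMap A₀ (integralClosure A₀ A) t := halg t
    have hgcompat' : ∀ a : A₀,
        g (algebraMap A₀ C a) = ιD (algebraMap A₀ (integralClosure A₀ A) a) := by
      intro a; rw [hgcompat a, halg a]
    have hgτ : g (algebraMap A₀ C t) = tD := hgcompat t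
    have injAp : Function.Injective (algebraMap A₀ (integralClosure A₀ A)) := by
      intro a b hab
      exact injA (congrArg Subtype.val hab)
    have hplus : ∀ u : integralClosure A₀ A, ∃ b : A₀,
        algebraMap A₀ (integralClosure A₀ A) b = tp ^ c * u := by
      intro u
      obtain ⟨b, hb⟩ := Hc (u : A) u.2
      refine ⟨b, Subtype.ext ?_⟩
      show algebraMap A₀ A b = ((tp ^ c * u : integralClosure A₀ A) : A)
      rw [MulMemClass.coe_mul, hvalpow tp c]
      exact hb
    have hspanD : ∀ (k : ℕ) (w : D), (tD ^ k * w) ∈ Ideal.span {tD} ^ k := by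
      intro k w
      rw [Ideal.span_singleton_pow, Ideal.mem_span_singleton]
      exact Dvd.intro w rfl
    -- STEP 1 : t^c · D ⊆ g(C)
    have hS1 : ∀ d : D, ∃ z : C, g z = tD ^ c * d := by
      intro d
      have hap : ∀ n : ℕ, ∃ xx : integralClosure A₀ A, ∃ dd : D,
          d = ιD xx + tD ^ n * dd := by
        intro n
        obtain ⟨xx, dd, h⟩ := acm_dense hD n d
        exact ⟨xx, dd, h⟩
      choose xs ds hds using hap
      choose as has using fun n => hplus (xs n)
      have hcau : ∀ {m n : ℕ}, m ≤ n →
          algebraMap A₀ C (as m) ≡ algebraMap A₀ C (as n)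
            [SMOD (Ideal.span {algebraMap A₀ C t} ^ m • ⊤ : Submodule C C)] := by
        intro m n hmn
        have hmem : ιD (algebraMap A₀ (integralClosure A₀ A) (as n - as m))
            ∈ Ideal.span {tD} ^ (c + m) := by
          have e1 : ιD (algebraMap A₀ (integralClosure A₀ A) (as n - as m))
              = tD ^ (c + m) * ds m - tD ^ (c + n) * ds n := by
            rw [map_sub, map_sub, has n, has m, map_mul, map_mul, map_pow, ← htDdef]
            have e2 : ιD (xs n) = d - tD ^ n * ds n := by rw [hds n]; ring
            have e3 : ιD (xs m) = d - tD ^ m * ds m := by rw [hds m]; ring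
            rw [e2, e3, pow_add, pow_add]
            ring
          rw [e1]
          exact sub_mem (hspanD (c + m) (ds m))
            (Ideal.pow_le_pow_right (by omega) (hspanD (c + n) (ds n)))
        obtain ⟨u, hu⟩ := acm_inj hD hmem
        obtain ⟨bu, hbu⟩ := hplus u
        have e4 : algebraMap A₀ (integralClosure A₀ A) (as n - as m)
            = algebraMap A₀ (integralClosure A₀ A) (t ^ m * bu) := by
          rw [hu, map_mul, map_pow, ← htpa, hbu]
          rw [pow_add]
          ring
        have e5 : as n - as m = t ^ m * bu := injAp e4
        rw [SModEq.sub_mem]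
        have e6 : Ideal.span {algebraMap A₀ C t} ^ m • (⊤ : Submodule C C)
            = Ideal.span {algebraMap A₀ C t} ^ m := by simp
        rw [e6, Ideal.span_singleton_pow, Ideal.mem_span_singleton]
        refine ⟨algebraMap A₀ C (-bu), ?_⟩
        rw [← map_sub, ← map_pow, ← map_mul]
        congr 1
        linear_combination -e5
      haveI := hC.1
      obtain ⟨z, hzlim⟩ := IsPrecomplete.prec inferInstance hcau
      refine ⟨z, ?_⟩
      have hdiff : ∀ n : ℕ, g z - tD ^ c * d ∈ Ideal.span {tD} ^ n := by
        intro n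
        have h1 : algebraMap A₀ C (as n) - z ∈ Ideal.span {algebraMap A₀ C t} ^ n := by
          have h2 := hzlim n
          rw [SModEq.sub_mem] at h2
          simpa using h2
        rw [Ideal.span_singleton_pow, Ideal.mem_span_singleton] at h1
        obtain ⟨w, hw⟩ := h1
        have h2 : g (algebraMap A₀ C (as n)) = tD ^ c * ιD (xs n) := by
          rw [hgcompat' (as n), has n, map_mul, map_pow]
        have h3 : g z - tD ^ c * d
            = -(g (algebraMap A₀ C t) ^ n * g w) - tD ^ (c + n) * ds n := by
          have h4 : z = algebraMap A₀ C (as n) - algebraMap A₀ C t ^ n * w := by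
            linear_combination -hw
          rw [h4, map_sub, map_mul, map_pow, h2, hds n, pow_add]
          ring
        rw [h3, hgτ]
        exact sub_mem (neg_mem (hspanD n (g w)))
          (Ideal.pow_le_pow_right (by omega) (hspanD (c + n) (ds n)))
      have h5 := acm_haus hD hdiff
      linear_combination h5
    -- injectivity of θ
    have hinj : Function.Injective θ := by
      rw [injective_iff_map_eq_zero]
      intro y hy
      obtain ⟨⟨xx, s⟩, hxy⟩ := IsLocalization.surj (Submonoid.powers (algebraMap A₀ C t)) y
      obtain ⟨m, hm⟩ := s.2
      have hm' : algebraMap A₀ C t ^ m = (s : C) := hm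
      have hxy' : y * algebraMap C A' (algebraMap A₀ C t ^ m) = algebraMap C A' xx := by
        rw [hm']; exact hxy
      have hgx : ιE (g xx) = 0 := by
        rw [← hθ xx, ← hxy', map_mul, hy, zero_mul]
      have hgx0 : g xx = 0 := injDE (by rw [hgx, map_zero])
      have hxx0 : xx = 0 := by
        apply acm_haus hC
        intro n
        obtain ⟨a, s2, hs2⟩ := acm_dense hC (n + c) xx
        have h1 : ιD (algebraMap A₀ (integralClosure A₀ A) a) ∈ Ideal.span {tD} ^ (n + c) := by
          have e1 : ιD (algebraMap A₀ (integralClosure A₀ A) a)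
              = -(tD ^ (n + c) * g s2) := by
            rw [← hgcompat' a]
            have e2 : algebraMap A₀ C a = xx - algebraMap A₀ C t ^ (n + c) * s2 := by
              linear_combination -hs2
            rw [e2, map_sub, map_mul, map_pow, hgτ, hgx0]
            ring
          rw [e1]
          exact neg_mem (hspanD (n + c) (g s2))
        obtain ⟨u, hu⟩ := acm_inj hD h1
        obtain ⟨bu, hbu⟩ := hplus u
        have e4 : algebraMap A₀ (integralClosure A₀ A) a
            = algebraMap A₀ (integralClosure A₀ A) (t ^ n * bu) := by
          rw [hu, map_mul, map_pow, ← htpa, hbu, pow_add]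
          ring
        have e5 : a = t ^ n * bu := injAp e4
        rw [hs2, e5, Ideal.span_singleton_pow, Ideal.mem_span_singleton]
        refine ⟨algebraMap A₀ C bu + algebraMap A₀ C t ^ c * s2, ?_⟩
        rw [map_mul, map_pow, pow_add]
        ring
      rw [hxx0, map_zero] at hxy'
      have hu2 : IsUnit (algebraMap C A' (algebraMap A₀ C t ^ m)) := by
        rw [map_pow]; exact hτu.pow m
      exact hu2.mul_right_cancel (by rw [zero_mul]; exact hxy')
    -- surjectivity of θ
    have hinv : θ (IsLocalization.Away.invSelf (S := A') (algebraMap A₀ C t)) * ιE tD = 1 := by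
      have h1 : algebraMap C A' (algebraMap A₀ C t)
          * IsLocalization.Away.invSelf (S := A') (algebraMap A₀ C t) = 1 :=
        IsLocalization.Away.mul_invSelf _
      have h2 := congrArg θ h1
      rw [map_mul, map_one, hθ, hgτ] at h2
      linear_combination h2
    have hsurj : Function.Surjective θ := by
      intro e
      obtain ⟨⟨d, s⟩, hde⟩ := IsLocalization.surj (Submonoid.powers tD) e
      obtain ⟨k, hk⟩ := s.2
      have hk' : tD ^ k = (s : D) := hk
      have hde' : e * ιE (tD ^ k) = ιE d := by rw [hk']; exact hde
      obtain ⟨z, hz⟩ := hS1 d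
      refine ⟨algebraMap C A' z
        * (IsLocalization.Away.invSelf (S := A') (algebraMap A₀ C t)) ^ (c + k), ?_⟩
      rw [map_mul, map_pow, hθ z, hz, map_mul, map_pow, ← hde', map_pow]
      have h3 : ιE tD ^ c * (e * ιE tD ^ k)
            * θ (IsLocalization.Away.invSelf (S := A') (algebraMap A₀ C t)) ^ (c + k)
          = e * (θ (IsLocalization.Away.invSelf (S := A') (algebraMap A₀ C t)) * ιE tD) ^ (c + k) := by
        rw [pow_add]
        ring
      rw [h3, hinv, one_pow, mul_one]
    -- image of the integral closure
    have himg1 : θ '' (integralClosure C A' : Set A') ⊆ Set.range ιE := by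
      rintro - ⟨y, hy, rfl⟩
      rw [SetLike.mem_coe] at hy
      obtain ⟨q, hq1, hq2⟩ := hy
      have hθy : θ y ∈ integralClosure D E := by
        refine ⟨q.map g, hq1.map g, ?_⟩
        rw [Polynomial.eval₂_map]
        have hcomp2 : ιE.comp g = θ.comp (algebraMap C A') := by
          ext r; rw [RingHom.comp_apply, RingHom.comp_apply, hθ r]
        rw [hcomp2, ← Polynomial.hom_eval₂, hq2, map_zero]
      have h4 := Hfwd (θ y) hθy
      rw [pow_zero, one_mul] at h4
      obtain ⟨w, hw⟩ := h4
      exact ⟨w, hw⟩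
    have himg2 : Set.range ιE ⊆ θ '' (integralClosure C A' : Set A') := by
      rintro - ⟨d, rfl⟩
      obtain ⟨xx, dd, hdd⟩ := acm_dense hD (c + 1) d
      obtain ⟨z, hz⟩ := hS1 dd
      obtain ⟨⟨aa, s⟩, hxa⟩ := IsLocalization.surj (Submonoid.powers t) ((xx : A))
      obtain ⟨m, hm⟩ := s.2
      have hm' : t ^ m = (s : A₀) := hm
      have hxa' : (xx : A) * algebraMap A₀ A (t ^ m) = algebraMap A₀ A aa := by
        rw [hm']; exact hxa
      refine ⟨f (xx : A) + algebraMap C A' (algebraMap A₀ C t * z), ?_, ?_⟩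
      · rw [SetLike.mem_coe]
        exact Subalgebra.add_mem _ (hfint _ xx.2)
          (Subalgebra.algebraMap_mem (integralClosure C A') _)
      · -- θ value computation
        have e2 : algebraMap A₀ (integralClosure A₀ A) aa = tp ^ m * xx := by
          refine Subtype.ext ?_
          show algebraMap A₀ A aa = ((tp ^ m * xx : integralClosure A₀ A) : A)
          rw [MulMemClass.coe_mul, hvalpow tp m, ← hxa', map_pow]
          show (xx : A) * algebraMap A₀ A t ^ m = algebraMap A₀ A t ^ m * (xx : A)
          ring
        have hθf : θ (f (xx : A)) = ιE (ιD xx) := by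
          have h1 := congrArg θ (congrArg f hxa')
          rw [map_mul, map_mul, hf, hf, hθ, hθ] at h1
          -- h1 : θ (f xx) * ιE (g (ι (t^m))) = ιE (g (ι aa))
          have h2 : g (algebraMap A₀ C (t ^ m)) = tD ^ m := by
            rw [map_pow, map_pow, hgτ]
          have h3 : g (algebraMap A₀ C aa) = tD ^ m * ιD xx := by
            rw [hgcompat' aa, e2, map_mul, map_pow, ← htDdef]
          rw [h2, h3, map_mul, map_pow] at h1
          exact (hEtu.pow m).mul_right_cancel (by linear_combination h1)
        rw [map_add, hθf, hθ, map_mul, hgτ, hz, hdd, map_add]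
        congr 1
        congr 1
        rw [← htDdef]
        ring
    refine ⟨⟨hinj, hsurj⟩, Set.Subset.antisymm himg1 himg2⟩
end

section
/- Let A₀ be a commutative ring with a nonzerodivisor t. Put A := A₀[1/t] and A' := Â₀[1/t], where Â₀ is the t-adic completion of A₀. Then: (1) A₀ is integrally closed in A (i.e. (A₀)⁺_A = A₀) if and only if Â₀ is integrally closed in A' (i.e. (Â₀)⁺_{A'} = Â₀); (2) A₀ is completely integrally closed in A (i.e. (A₀)*_A = A₀) if and only if Â₀ is completely integrally closed in A' (i.e. (Â₀)*_{A'} = Â₀). -/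
/-- Let `A₀` be a commutative ring with a nonzerodivisor `t`, let
`A := A₀[1/t]`, let `Â₀` (here `C`) be the `t`-adic completion of `A₀` and
`A' := Â₀[1/t]`.  Then:
(1) `A₀` is integrally closed in `A` iff `Â₀` is integrally closed in `A'`;
(2) `A₀` is completely integrally closed in `A` iff `Â₀` is completely
integrally closed in `A'` (where `x` is almost integral over `R` iff all powers
of `x` lie in a common finitely generated `R`-submodule). -/
theorem stmt5 {A₀ A C A' : Type*}
    [CommRing A₀] [CommRing A] [CommRing C] [CommRing A']
    [Algebra A₀ A] [Algebra A₀ C] [Algebra C A']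
    (t : A₀) (ht : t ∈ nonZeroDivisors A₀)
    [IsLocalization.Away t A]
    (hC : IsAdicCompletionMap t (algebraMap A₀ C))
    [IsLocalization.Away (algebraMap A₀ C t) A'] :
    ((∀ x : A, IsIntegral A₀ x → x ∈ (algebraMap A₀ A).range) ↔
      (∀ x : A', IsIntegral C x → x ∈ (algebraMap C A').range)) ∧
    ((∀ x : A, (∃ N : Submodule A₀ A, N.FG ∧ ∀ n : ℕ, x ^ n ∈ N) →
        x ∈ (algebraMap A₀ A).range) ↔
      (∀ x : A', (∃ N : Submodule C A', N.FG ∧ ∀ n : ℕ, x ^ n ∈ N) →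
        x ∈ (algebraMap C A').range)) := by
  obtain ⟨hcompl, hdense0, hinj0⟩ := hC
  have hdense : ∀ (n : ℕ) (c : C), ∃ a : A₀,
      (algebraMap A₀ C t) ^ n ∣ (c - algebraMap A₀ C a) := by
    intro n c
    obtain ⟨a, ha⟩ := hdense0 n c
    exact ⟨a, by rwa [Ideal.span_singleton_pow, Ideal.mem_span_singleton] at ha⟩
  have hinj : ∀ (n : ℕ) (a : A₀), (algebraMap A₀ C t) ^ n ∣ algebraMap A₀ C a → t ^ n ∣ a := by
    intro n a h
    have := hinj0 n a (by rwa [Ideal.span_singleton_pow, Ideal.mem_span_singleton])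
    rwa [Ideal.span_singleton_pow, Ideal.mem_span_singleton] at this
  -- `t` is cancellable in `A₀`
  have hcancel : ∀ (x y : A₀), t * x = t * y → x = y := by
    intro x y h
    exact (mul_cancel_left_mem_nonZeroDivisors ht).mp h
  -- `ι t` is a nonzerodivisor in `C`
  have htC : algebraMap A₀ C t ∈ nonZeroDivisors C := by
    rw [mem_nonZeroDivisors_iff_right]
    intro z hz
    refine hcompl.toIsHausdorff.haus z fun n => ?_
    rw [SModEq.zero, Ideal.smul_eq_mul, Ideal.mul_top, Ideal.span_singleton_pow,
      Ideal.mem_span_singleton]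
    obtain ⟨a, e, hae⟩ : ∃ a e, z - algebraMap A₀ C a = (algebraMap A₀ C t) ^ (n+1) * e := by
      obtain ⟨a, e, he⟩ := hdense (n+1) z
      exact ⟨a, e, he⟩
    have h1 : (algebraMap A₀ C t) ^ (n+1) ∣ algebraMap A₀ C (t * a) := by
      refine ⟨-(algebraMap A₀ C t * e), ?_⟩
      have : algebraMap A₀ C a = z - (algebraMap A₀ C t) ^ (n+1) * e := by
        rw [← hae]; ring
      rw [map_mul, this]
      linear_combination hz
    obtain ⟨b, hb⟩ := hinj (n+1) (t*a) h1
    have hab : a = t ^ n * b := by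
      apply hcancel
      rw [hb]; ring
    refine ⟨algebraMap A₀ C b + algebraMap A₀ C t * e, ?_⟩
    have hz' : z = algebraMap A₀ C a + (algebraMap A₀ C t) ^ (n+1) * e := by
      rw [← hae]; ring
    rw [hz', hab, map_mul, map_pow]
    ring
  have injA : Function.Injective (algebraMap A₀ A) :=
    IsLocalization.injective A (Submonoid.powers_le.mpr ht)
  have injA' : Function.Injective (algebraMap C A') :=
    IsLocalization.injective A' (Submonoid.powers_le.mpr htC)
  have huA : IsUnit (algebraMap A₀ A t) :=
    IsLocalization.map_units A ⟨t, Submonoid.mem_powers t⟩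
  have huA' : IsUnit (algebraMap C A' (algebraMap A₀ C t)) :=
    IsLocalization.map_units A' ⟨_, Submonoid.mem_powers _⟩
  have hsurjA : ∀ z : A, ∃ (k : ℕ) (a : A₀),
      z * (algebraMap A₀ A) t ^ k = algebraMap A₀ A a := by
    intro z
    obtain ⟨⟨a, s⟩, hs⟩ := IsLocalization.surj (Submonoid.powers t) z
    obtain ⟨k, hk⟩ := s.2
    have hk' : t ^ k = (s : A₀) := hk
    refine ⟨k, a, ?_⟩
    rw [← map_pow, hk']
    exact hs
  have hsurjA' : ∀ z : A', ∃ (k : ℕ) (c : C),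
      z * (algebraMap C A') (algebraMap A₀ C t) ^ k = algebraMap C A' c := by
    intro z
    obtain ⟨⟨c, s⟩, hs⟩ := IsLocalization.surj (Submonoid.powers (algebraMap A₀ C t)) z
    obtain ⟨k, hk⟩ := s.2
    have hk' : algebraMap A₀ C t ^ k = (s : C) := hk
    refine ⟨k, c, ?_⟩
    rw [← map_pow, hk']
    exact hs
  -- bounded denominators on f.g. submodules
  have hboundA : ∀ N : Submodule A₀ A, N.FG →
      ∃ K : ℕ, ∀ z ∈ N, ∃ a : A₀, z * (algebraMap A₀ A) t ^ K = algebraMap A₀ A a := by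
    intro N hN
    obtain ⟨S, rfl⟩ := hN
    choose k aOf hka using hsurjA
    refine ⟨S.sup k, ?_⟩
    intro z hz
    induction hz using Submodule.span_induction with
    | mem z hzS =>
      have hle : k z ≤ S.sup k := Finset.le_sup hzS
      refine ⟨aOf z * t ^ (S.sup k - k z), ?_⟩
      rw [map_mul, ← hka z, map_pow, mul_assoc, ← pow_add, Nat.add_sub_cancel' hle]
    | zero => exact ⟨0, by simp⟩
    | add y z _ _ hy hz =>
      obtain ⟨ay, hay⟩ := hy
      obtain ⟨az, haz⟩ := hz
      exact ⟨ay + az, by rw [add_mul, hay, haz, map_add]⟩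
    | smul r z _ hz =>
      obtain ⟨az, haz⟩ := hz
      exact ⟨r * az, by rw [Algebra.smul_def, mul_assoc, haz, map_mul]⟩
  have hboundA' : ∀ N : Submodule C A', N.FG →
      ∃ K : ℕ, ∀ z ∈ N, ∃ c : C,
        z * (algebraMap C A') (algebraMap A₀ C t) ^ K = algebraMap C A' c := by
    intro N hN
    obtain ⟨S, rfl⟩ := hN
    choose k cOf hkc using hsurjA'
    refine ⟨S.sup k, ?_⟩
    intro z hz
    induction hz using Submodule.span_induction with
    | mem z hzS =>
      have hle : k z ≤ S.sup k := Finset.le_sup hzS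
      refine ⟨cOf z * (algebraMap A₀ C t) ^ (S.sup k - k z), ?_⟩
      rw [map_mul, ← hkc z, map_pow, mul_assoc, ← pow_add, Nat.add_sub_cancel' hle]
    | zero => exact ⟨0, by simp⟩
    | add y z _ _ hy hz =>
      obtain ⟨ay, hay⟩ := hy
      obtain ⟨az, haz⟩ := hz
      exact ⟨ay + az, by rw [add_mul, hay, haz, map_add]⟩
    | smul r z _ hz =>
      obtain ⟨az, haz⟩ := hz
      exact ⟨r * az, by rw [Algebra.smul_def, mul_assoc, haz, map_mul]⟩
  -- the induced map `A → A'`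
  have hcomap : Submonoid.powers t ≤
      Submonoid.comap (algebraMap A₀ C) (Submonoid.powers (algebraMap A₀ C t)) := by
    rintro _ ⟨n, rfl⟩
    exact ⟨n, (map_pow _ t n).symm⟩
  set f : A →+* A' := IsLocalization.map A' (algebraMap A₀ C) hcomap with hfdef
  have hf : ∀ a : A₀, f (algebraMap A₀ A a) = algebraMap C A' (algebraMap A₀ C a) :=
    fun a => IsLocalization.map_eq hcomap a
  -- pulling back membership in the image
  have hpull : ∀ x : A, f x ∈ (algebraMap C A').range → x ∈ (algebraMap A₀ A).range := by
    intro x hx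
    obtain ⟨c, hc⟩ := hx
    obtain ⟨k, a, hka⟩ := hsurjA x
    have h1 : algebraMap C A' (algebraMap A₀ C a) =
        algebraMap C A' (c * algebraMap A₀ C t ^ k) := by
      rw [map_mul, hc, map_pow, ← hf t, ← map_pow f, ← map_mul f, hka, hf]
    have h2 : algebraMap A₀ C a = c * algebraMap A₀ C t ^ k := injA' h1
    obtain ⟨b, hb⟩ := hinj k a ⟨c, by rw [h2]; ring⟩
    refine ⟨b, ?_⟩
    have h3 : algebraMap A₀ A t ^ k * algebraMap A₀ A b
        = algebraMap A₀ A t ^ k * x := by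
      rw [← map_pow, ← map_mul, ← hb, ← hka, map_pow]
      ring
    exact (huA.pow k).mul_left_cancel h3
  -- getting into the image of `C` from divisibility of the numerator
  have hup : ∀ (x : A') (j : ℕ) (c : C),
      x * (algebraMap C A') (algebraMap A₀ C t) ^ j = algebraMap C A' c →
      (algebraMap A₀ C t) ^ j ∣ c → x ∈ (algebraMap C A').range := by
    rintro x j c hxc ⟨c', hc'⟩
    refine ⟨c', ?_⟩
    have h3 : (algebraMap C A') (algebraMap A₀ C t) ^ j * algebraMap C A' c'
        = (algebraMap C A') (algebraMap A₀ C t) ^ j * x := by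
      calc (algebraMap C A') (algebraMap A₀ C t) ^ j * algebraMap C A' c'
          = algebraMap C A' ((algebraMap A₀ C t) ^ j * c') := by rw [map_mul, map_pow]
        _ = algebraMap C A' c := by rw [← hc']
        _ = x * (algebraMap C A') (algebraMap A₀ C t) ^ j := hxc.symm
        _ = (algebraMap C A') (algebraMap A₀ C t) ^ j * x := mul_comm _ _
    exact (huA'.pow j).mul_left_cancel h3
  -- ============ direction (⇐) for integral closedness ============
  have dirInt_mpr : (∀ x : A', IsIntegral C x → x ∈ (algebraMap C A').range) →
      ∀ x : A, IsIntegral A₀ x → x ∈ (algebraMap A₀ A).range := by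
    intro H' x hx
    obtain ⟨p, hmon, hev⟩ := hx
    apply hpull
    apply H'
    refine ⟨p.map (algebraMap A₀ C), hmon.map _, ?_⟩
    rw [Polynomial.eval₂_map]
    have hcomp : (algebraMap C A').comp (algebraMap A₀ C) = f.comp (algebraMap A₀ A) := by
      ext a
      simp [hf]
    rw [hcomp, ← Polynomial.hom_eval₂, hev, map_zero]
  -- ============ direction (⇐) for complete integral closedness ============
  have dirAI_mpr : (∀ x : A', (∃ N : Submodule C A', N.FG ∧ ∀ n : ℕ, x ^ n ∈ N) →
        x ∈ (algebraMap C A').range) →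
      ∀ x : A, (∃ N : Submodule A₀ A, N.FG ∧ ∀ n : ℕ, x ^ n ∈ N) →
        x ∈ (algebraMap A₀ A).range := by
    rintro H' x ⟨N, hfg, hpow⟩
    obtain ⟨K, hK⟩ := hboundA N hfg
    apply hpull
    apply H'
    obtain ⟨v, hv⟩ := (huA'.pow K).exists_right_inv
    refine ⟨Submodule.span C {v}, Submodule.fg_span_singleton v, fun n => ?_⟩
    obtain ⟨a, haz⟩ := hK (x ^ n) (hpow n)
    rw [Submodule.mem_span_singleton]
    refine ⟨algebraMap A₀ C a, ?_⟩
    have h4 : f x ^ n * (algebraMap C A' (algebraMap A₀ C t)) ^ K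
        = algebraMap C A' (algebraMap A₀ C a) := by
      calc f x ^ n * (algebraMap C A' (algebraMap A₀ C t)) ^ K
          = f (x ^ n * algebraMap A₀ A t ^ K) := by rw [map_mul, map_pow, map_pow, hf t]
        _ = algebraMap C A' (algebraMap A₀ C a) := by rw [haz, hf]
    rw [Algebra.smul_def, ← h4, mul_assoc, hv, mul_one]
  -- ============ direction (⇒) for complete integral closedness ============
  have dirAI_mp : (∀ x : A, (∃ N : Submodule A₀ A, N.FG ∧ ∀ n : ℕ, x ^ n ∈ N) →
        x ∈ (algebraMap A₀ A).range) →
      ∀ x : A', (∃ N : Submodule C A', N.FG ∧ ∀ n : ℕ, x ^ n ∈ N) →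
        x ∈ (algebraMap C A').range := by
    rintro H x ⟨N, hfg, hpow⟩
    obtain ⟨K, hK⟩ := hboundA' N hfg
    choose cseq hcseq using fun n => hK (x ^ n) (hpow n)
    obtain ⟨j, c0, hj⟩ := hsurjA' x
    have habs : ∀ n : ℕ, (algebraMap A₀ C t) ^ (j*n) ∣ (algebraMap A₀ C t) ^ K * c0 ^ n := by
      intro n
      refine ⟨cseq n, ?_⟩
      apply injA'
      calc algebraMap C A' ((algebraMap A₀ C t) ^ K * c0 ^ n)
          = (algebraMap C A' (algebraMap A₀ C t)) ^ K * (algebraMap C A' c0) ^ n := by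
            rw [map_mul, map_pow, map_pow]
        _ = (algebraMap C A' (algebraMap A₀ C t)) ^ K
            * (x * (algebraMap C A') (algebraMap A₀ C t) ^ j) ^ n := by rw [hj]
        _ = (x ^ n * (algebraMap C A') (algebraMap A₀ C t) ^ K)
            * ((algebraMap C A' (algebraMap A₀ C t)) ^ j) ^ n := by ring
        _ = (x ^ n * (algebraMap C A') (algebraMap A₀ C t) ^ K)
            * (algebraMap C A' (algebraMap A₀ C t)) ^ (j*n) := by rw [← pow_mul]
        _ = algebraMap C A' (cseq n) * (algebraMap C A' (algebraMap A₀ C t)) ^ (j*n) := by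
            rw [hcseq n]
        _ = algebraMap C A' ((algebraMap A₀ C t) ^ (j*n) * cseq n) := by
            rw [map_mul, map_pow]; ring
    obtain ⟨a, e, he⟩ : ∃ a e, c0 - algebraMap A₀ C a = (algebraMap A₀ C t) ^ j * e := by
      obtain ⟨a, e, he⟩ := hdense j c0
      exact ⟨a, e, he⟩
    have ha' : algebraMap A₀ C a = c0 + -((algebraMap A₀ C t) ^ j * e) := by
      rw [← he]; ring
    have hdivn : ∀ n : ℕ, t ^ (j*n) ∣ t ^ K * a ^ n := by
      intro n
      apply hinj
      have hexpand : algebraMap A₀ C (t ^ K * a ^ n) =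
          ∑ r ∈ Finset.range (n+1), ((algebraMap A₀ C t) ^ K * c0 ^ r) *
            ((-((algebraMap A₀ C t) ^ j * e)) ^ (n - r) * (n.choose r : C)) := by
        rw [map_mul, map_pow, map_pow, ha', add_pow, Finset.mul_sum]
        apply Finset.sum_congr rfl
        intro r hr
        ring
      rw [hexpand]
      apply Finset.dvd_sum
      intro r hr
      have hrn : r ≤ n := Nat.lt_succ_iff.mp (Finset.mem_range.mp hr)
      have h6 : (algebraMap A₀ C t) ^ (j*(n-r)) ∣
          (-((algebraMap A₀ C t) ^ j * e)) ^ (n - r) * (n.choose r : C) := by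
        apply dvd_mul_of_dvd_left
        rw [pow_mul]
        apply pow_dvd_pow_of_dvd
        exact (dvd_neg).mpr ⟨e, rfl⟩
      have h7 := mul_dvd_mul (habs r) h6
      rwa [← pow_add, ← Nat.mul_add, Nat.add_sub_cancel' hrn] at h7
    choose d hd using hdivn
    set y : A := algebraMap A₀ A a * ((huA.unit⁻¹ : Aˣ) : A) ^ j with hydef
    have hinvt : ((huA.unit⁻¹ : Aˣ) : A) * algebraMap A₀ A t = 1 := huA.val_inv_mul
    have hy : y * algebraMap A₀ A t ^ j = algebraMap A₀ A a := by
      calc y * algebraMap A₀ A t ^ j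
          = algebraMap A₀ A a * (((huA.unit⁻¹ : Aˣ) : A) * algebraMap A₀ A t) ^ j := by
            rw [hydef, mul_pow]; ring
        _ = algebraMap A₀ A a := by rw [hinvt, one_pow, mul_one]
    have hyn : ∀ i : ℕ, y ^ i * algebraMap A₀ A t ^ (j*i) = algebraMap A₀ A (a ^ i) := by
      intro i
      calc y ^ i * algebraMap A₀ A t ^ (j*i)
          = (y * algebraMap A₀ A t ^ j) ^ i := by rw [pow_mul, ← mul_pow]
        _ = algebraMap A₀ A (a ^ i) := by rw [hy, map_pow]
    obtain ⟨w, hw⟩ := (huA.pow K).exists_right_inv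
    have hyw : ∀ n : ℕ, y ^ n = algebraMap A₀ A (d n) * w := by
      intro n
      have h8 : algebraMap A₀ A t ^ (j*n) * (algebraMap A₀ A t ^ K * y ^ n)
          = algebraMap A₀ A t ^ (j*n) * algebraMap A₀ A (d n) := by
        calc algebraMap A₀ A t ^ (j*n) * (algebraMap A₀ A t ^ K * y ^ n)
            = algebraMap A₀ A t ^ K * (y ^ n * algebraMap A₀ A t ^ (j*n)) := by ring
          _ = algebraMap A₀ A t ^ K * algebraMap A₀ A (a ^ n) := by rw [hyn n]
          _ = algebraMap A₀ A (t ^ K * a ^ n) := by rw [map_mul, map_pow, map_pow]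
          _ = algebraMap A₀ A (t ^ (j*n) * d n) := by rw [hd n]
          _ = algebraMap A₀ A t ^ (j*n) * algebraMap A₀ A (d n) := by rw [map_mul, map_pow]
      have h9 : algebraMap A₀ A t ^ K * y ^ n = algebraMap A₀ A (d n) :=
        (huA.pow (j*n)).mul_left_cancel h8
      calc y ^ n = y ^ n * 1 := by ring
        _ = y ^ n * (algebraMap A₀ A t ^ K * w) := by rw [hw]
        _ = algebraMap A₀ A (d n) * w := by rw [← h9]; ring
    have hyint : y ∈ (algebraMap A₀ A).range := by
      apply H
      refine ⟨Submodule.span A₀ {w}, Submodule.fg_span_singleton w, fun n => ?_⟩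
      rw [Submodule.mem_span_singleton]
      exact ⟨d n, by rw [Algebra.smul_def, hyw n]⟩
    obtain ⟨a', ha2⟩ := hyint
    have haa : a = a' * t ^ j := by
      apply injA
      rw [← hy, ← ha2, map_mul, map_pow]
    apply hup x j c0 hj
    refine ⟨algebraMap A₀ C a' + e, ?_⟩
    calc c0 = algebraMap A₀ C a + (algebraMap A₀ C t) ^ j * e := by rw [← he]; ring
      _ = algebraMap A₀ C t ^ j * (algebraMap A₀ C a' + e) := by
          rw [haa, map_mul, map_pow]; ring
  -- ============ direction (⇒) for integral closedness ============
  have dirInt_mp : (∀ x : A, IsIntegral A₀ x → x ∈ (algebraMap A₀ A).range) →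
      ∀ x : A', IsIntegral C x → x ∈ (algebraMap C A').range := by
    intro H x hx
    obtain ⟨p, hmon, hev⟩ := hx
    by_cases hn0 : p.natDegree = 0
    · have hp1 : p = 1 := (Polynomial.Monic.natDegree_eq_zero hmon).mp hn0
      have h10 : (1 : A') = 0 := by
        have h := hev
        rwa [hp1, Polynomial.eval₂_one] at h
      refine ⟨0, ?_⟩
      rw [map_zero]
      calc (0:A') = x * 0 := by ring
        _ = x * 1 := by rw [h10]
        _ = x := by ring
    set n := p.natDegree with hndef
    have hn : 0 < n := Nat.pos_of_ne_zero hn0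
    obtain ⟨j, c0, hj⟩ := hsurjA' x
    have hsum0 : x ^ n + ∑ i ∈ Finset.range n, algebraMap C A' (p.coeff i) * x ^ i = 0 := by
      have h11 := hev
      rw [Polynomial.eval₂_eq_sum_range, Finset.sum_range_succ, ← hndef,
        hmon.coeff_natDegree, map_one, one_mul] at h11
      rw [add_comm]
      exact h11
    have hrel : c0 ^ n + ∑ i ∈ Finset.range n,
        p.coeff i * c0 ^ i * (algebraMap A₀ C t) ^ (j * (n - i)) = 0 := by
      apply injA'
      rw [map_zero, map_add, map_pow, map_sum]
      have hterm : ∀ i ∈ Finset.range n,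
          algebraMap C A' (p.coeff i * c0 ^ i * (algebraMap A₀ C t) ^ (j * (n - i)))
            = (algebraMap C A' (p.coeff i) * x ^ i)
              * (algebraMap C A' (algebraMap A₀ C t)) ^ (j * n) := by
        intro i hi
        have hin : i ≤ n := le_of_lt (Finset.mem_range.mp hi)
        calc algebraMap C A' (p.coeff i * c0 ^ i * (algebraMap A₀ C t) ^ (j * (n - i)))
            = algebraMap C A' (p.coeff i)
              * (x * (algebraMap C A') (algebraMap A₀ C t) ^ j) ^ i
              * (algebraMap C A' (algebraMap A₀ C t)) ^ (j * (n - i)) := by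
              rw [map_mul, map_mul, map_pow, map_pow, hj]
          _ = (algebraMap C A' (p.coeff i) * x ^ i)
              * ((algebraMap C A' (algebraMap A₀ C t)) ^ (j*i)
                * (algebraMap C A' (algebraMap A₀ C t)) ^ (j * (n - i))) := by
              rw [mul_pow, ← pow_mul]; ring
          _ = (algebraMap C A' (p.coeff i) * x ^ i)
              * (algebraMap C A' (algebraMap A₀ C t)) ^ (j*n) := by
              rw [← pow_add, ← Nat.mul_add, Nat.add_sub_cancel' hin]
      rw [Finset.sum_congr rfl hterm, ← Finset.sum_mul, ← hj, mul_pow, ← pow_mul,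
        ← add_mul, hsum0, zero_mul]
    obtain ⟨a, e, he⟩ : ∃ a e, c0 - algebraMap A₀ C a = (algebraMap A₀ C t) ^ (j*n) * e := by
      obtain ⟨a, e, he⟩ := hdense (j*n) c0
      exact ⟨a, e, he⟩
    choose b hb using fun i => hdense (j*n) (p.coeff i)
    have hD : t ^ (j*n) ∣ (a ^ n + ∑ i ∈ Finset.range n, b i * t ^ (j*(n-i)) * a ^ i) := by
      apply hinj
      have hmapD : algebraMap A₀ C (a ^ n + ∑ i ∈ Finset.range n, b i * t ^ (j*(n-i)) * a ^ i)
          = (algebraMap A₀ C a) ^ n + ∑ i ∈ Finset.range n,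
            algebraMap A₀ C (b i) * (algebraMap A₀ C a) ^ i
              * (algebraMap A₀ C t) ^ (j*(n-i)) := by
        rw [map_add, map_pow, map_sum]
        congr 1
        apply Finset.sum_congr rfl
        intro i hi
        rw [map_mul, map_mul, map_pow, map_pow]
        ring
      have hsplit : (algebraMap A₀ C a) ^ n + ∑ i ∈ Finset.range n,
            algebraMap A₀ C (b i) * (algebraMap A₀ C a) ^ i * (algebraMap A₀ C t) ^ (j*(n-i))
          = ((algebraMap A₀ C a) ^ n - c0 ^ n)
            + ∑ i ∈ Finset.range n,
              (algebraMap A₀ C (b i) * (algebraMap A₀ C a) ^ i - p.coeff i * c0 ^ i)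
                * (algebraMap A₀ C t) ^ (j*(n-i)) := by
        have h12 : ∑ i ∈ Finset.range n,
              (algebraMap A₀ C (b i) * (algebraMap A₀ C a) ^ i - p.coeff i * c0 ^ i)
                * (algebraMap A₀ C t) ^ (j*(n-i))
            = (∑ i ∈ Finset.range n, algebraMap A₀ C (b i) * (algebraMap A₀ C a) ^ i
                * (algebraMap A₀ C t) ^ (j*(n-i)))
              - ∑ i ∈ Finset.range n, p.coeff i * c0 ^ i * (algebraMap A₀ C t) ^ (j*(n-i)) := by
          rw [← Finset.sum_sub_distrib]
          apply Finset.sum_congr rfl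
          intro i hi
          ring
        rw [h12]
        linear_combination hrel
      rw [hmapD, hsplit]
      have hca : (algebraMap A₀ C t) ^ (j*n) ∣ algebraMap A₀ C a - c0 := by
        rw [show algebraMap A₀ C a - c0 = -(c0 - algebraMap A₀ C a) by ring]
        exact (dvd_neg).mpr ⟨e, he⟩
      refine dvd_add ?_ (Finset.dvd_sum ?_)
      · exact dvd_trans hca (sub_dvd_pow_sub_pow _ _ n)
      · intro i hi
        apply dvd_mul_of_dvd_left
        have h13 : algebraMap A₀ C (b i) * (algebraMap A₀ C a) ^ i - p.coeff i * c0 ^ i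
            = (algebraMap A₀ C (b i) - p.coeff i) * (algebraMap A₀ C a) ^ i
              + p.coeff i * ((algebraMap A₀ C a) ^ i - c0 ^ i) := by ring
        rw [h13]
        refine dvd_add (dvd_mul_of_dvd_left ?_ _) (Dvd.dvd.mul_left ?_ _)
        · rw [show algebraMap A₀ C (b i) - p.coeff i
              = -(p.coeff i - algebraMap A₀ C (b i)) by ring]
          exact (dvd_neg).mpr (hb i)
        · exact dvd_trans hca (sub_dvd_pow_sub_pow _ _ i)
    obtain ⟨g, hg⟩ := hD
    set y : A := algebraMap A₀ A a * ((huA.unit⁻¹ : Aˣ) : A) ^ j with hydef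
    have hinvt : ((huA.unit⁻¹ : Aˣ) : A) * algebraMap A₀ A t = 1 := huA.val_inv_mul
    have hy : y * algebraMap A₀ A t ^ j = algebraMap A₀ A a := by
      calc y * algebraMap A₀ A t ^ j
          = algebraMap A₀ A a * (((huA.unit⁻¹ : Aˣ) : A) * algebraMap A₀ A t) ^ j := by
            rw [hydef, mul_pow]; ring
        _ = algebraMap A₀ A a := by rw [hinvt, one_pow, mul_one]
    have hyn : ∀ i : ℕ, y ^ i * algebraMap A₀ A t ^ (j*i) = algebraMap A₀ A (a ^ i) := by
      intro i
      calc y ^ i * algebraMap A₀ A t ^ (j*i)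
          = (y * algebraMap A₀ A t ^ j) ^ i := by rw [pow_mul, ← mul_pow]
        _ = algebraMap A₀ A (a ^ i) := by rw [hy, map_pow]
    set q : Polynomial A₀ := Polynomial.X ^ n
      + (∑ i ∈ Finset.range n, Polynomial.C (b i) * Polynomial.X ^ i - Polynomial.C g)
      with hqdef
    have hqmon : q.Monic := by
      apply Polynomial.monic_X_pow_add
      have hdeg1 : (∑ i ∈ Finset.range n, Polynomial.C (b i) * Polynomial.X ^ i).degree
          < (n : WithBot ℕ) := by
        apply lt_of_le_of_lt (Polynomial.degree_sum_le _ _)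
        rw [Finset.sup_lt_iff (by exact_mod_cast WithBot.bot_lt_coe n)]
        intro i hi
        apply lt_of_le_of_lt (Polynomial.degree_C_mul_X_pow_le i (b i))
        exact_mod_cast Finset.mem_range.mp hi
      apply lt_of_le_of_lt (Polynomial.degree_sub_le _ _)
      rw [max_lt_iff]
      refine ⟨hdeg1, lt_of_le_of_lt Polynomial.degree_C_le ?_⟩
      exact_mod_cast hn
    have hexp : Polynomial.eval₂ (algebraMap A₀ A) y q
        = y ^ n + (∑ i ∈ Finset.range n, algebraMap A₀ A (b i) * y ^ i - algebraMap A₀ A g) := by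
      rw [hqdef]
      simp [Polynomial.eval₂_add, Polynomial.eval₂_sub, Polynomial.eval₂_finset_sum,
        Polynomial.eval₂_mul, Polynomial.eval₂_C, Polynomial.eval₂_X_pow]
    have hcollect : Polynomial.eval₂ (algebraMap A₀ A) y q * algebraMap A₀ A t ^ (j*n) = 0 := by
      rw [hexp, add_mul, sub_mul, Finset.sum_mul]
      have hterm2 : ∀ i ∈ Finset.range n,
          algebraMap A₀ A (b i) * y ^ i * algebraMap A₀ A t ^ (j*n)
            = algebraMap A₀ A (b i * t ^ (j*(n-i)) * a ^ i) := by
        intro i hi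
        have hin : i ≤ n := le_of_lt (Finset.mem_range.mp hi)
        have h14 : y ^ i * algebraMap A₀ A t ^ (j*n)
            = algebraMap A₀ A (a ^ i) * algebraMap A₀ A t ^ (j*(n-i)) := by
          calc y ^ i * algebraMap A₀ A t ^ (j*n)
              = (y ^ i * algebraMap A₀ A t ^ (j*i)) * algebraMap A₀ A t ^ (j*(n-i)) := by
                rw [mul_assoc, ← pow_add, ← Nat.mul_add, Nat.add_sub_cancel' hin]
            _ = algebraMap A₀ A (a ^ i) * algebraMap A₀ A t ^ (j*(n-i)) := by rw [hyn i]
        calc algebraMap A₀ A (b i) * y ^ i * algebraMap A₀ A t ^ (j*n)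
            = algebraMap A₀ A (b i) * (y ^ i * algebraMap A₀ A t ^ (j*n)) := by ring
          _ = algebraMap A₀ A (b i)
              * (algebraMap A₀ A (a ^ i) * algebraMap A₀ A t ^ (j*(n-i))) := by rw [h14]
          _ = algebraMap A₀ A (b i * t ^ (j*(n-i)) * a ^ i) := by
              rw [map_mul, map_mul, map_pow, map_pow]; ring
      rw [Finset.sum_congr rfl hterm2, hyn n, ← map_sum, ← map_pow, ← map_mul, ← map_sub,
        ← map_add, show a ^ n + (∑ i ∈ Finset.range n, b i * t ^ (j*(n-i)) * a ^ i
          - g * t ^ (j*n))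
        = (a ^ n + ∑ i ∈ Finset.range n, b i * t ^ (j*(n-i)) * a ^ i) - t ^ (j*n) * g by ring,
        hg, sub_self, map_zero]
    have hevq : Polynomial.eval₂ (algebraMap A₀ A) y q = 0 := by
      refine (huA.pow (j*n)).mul_left_cancel ?_
      rw [mul_zero, mul_comm]
      exact hcollect
    obtain ⟨a', ha2⟩ := H y ⟨q, hqmon, hevq⟩
    have haa : a = a' * t ^ j := by
      apply injA
      rw [← hy, ← ha2, map_mul, map_pow]
    apply hup x j c0 hj
    have hjn : j ≤ j * n := Nat.le_mul_of_pos_right j hn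
    have hsplitpow : (algebraMap A₀ C t) ^ (j*n)
        = (algebraMap A₀ C t) ^ j * (algebraMap A₀ C t) ^ (j*n - j) := by
      rw [← pow_add, Nat.add_sub_cancel' hjn]
    refine ⟨algebraMap A₀ C a' + algebraMap A₀ C t ^ (j*n - j) * e, ?_⟩
    calc c0 = algebraMap A₀ C a + algebraMap A₀ C t ^ (j*n) * e := by rw [← he]; ring
      _ = algebraMap A₀ C t ^ j
          * (algebraMap A₀ C a' + algebraMap A₀ C t ^ (j*n - j) * e) := by
          rw [haa, map_mul, map_pow, hsplitpow]; ring
  exact ⟨⟨dirInt_mp, dirInt_mpr⟩, ⟨dirAI_mp, dirAI_mpr⟩⟩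
end

section
/- Let A₀ be a commutative ring with a nonzerodivisor t, and let B₀ be a t-torsion-free A₀-algebra such that B := B₀[1/t] is a module-finite A₀[1/t]-algebra. Then t·(A₀)*_B ⊆ (A₀)⁺_B, i.e. for every element b ∈ B that is almost integral over A₀, the element t·b is integral over A₀. -/
/-- Let `A₀` be a commutative ring with a nonzerodivisor `t`, and let
`B₀` be a `t`-torsion-free `A₀`-algebra such that `B := B₀[1/t]` is a module-finite
`A := A₀[1/t]`-algebra.  Then for every `b ∈ B` that is almost integral over `A₀`
(i.e. all powers of `b` lie in a common finitely generated `A₀`-submodule of `B`),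
the element `t · b` is integral over `A₀`. -/
theorem stmt6 {A₀ B₀ A B : Type*} [CommRing A₀] [CommRing B₀] [CommRing A] [CommRing B]
    [Algebra A₀ B₀] [Algebra A₀ A] [Algebra B₀ B] [Algebra A₀ B] [Algebra A B]
    [IsScalarTower A₀ B₀ B] [IsScalarTower A₀ A B]
    (t : A₀) (ht : t ∈ nonZeroDivisors A₀)
    [IsLocalization.Away t A]
    [IsLocalization.Away (algebraMap A₀ B₀ t) B]
    (htf : ∀ x : B₀, algebraMap A₀ B₀ t * x = 0 → x = 0)
    [Module.Finite A B]
    (b : B) (hb : ∃ N : Submodule A₀ B, N.FG ∧ ∀ n : ℕ, b ^ n ∈ N) :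
    IsIntegral A₀ (algebraMap A₀ B t * b) := by
  obtain ⟨N, hNfg, hbN⟩ := hb
  obtain ⟨G, hG⟩ := hNfg
  haveI : Algebra.IsIntegral A B := Algebra.IsIntegral.of_finite A B
  -- every element of B becomes integral over A₀ after scaling by a power of t
  have key : ∀ g : B, ∃ k : ℕ, IsIntegral A₀ (t ^ k • g) := by
    intro g
    obtain ⟨⟨m, k, hk⟩, hm⟩ :=
      (Algebra.IsIntegral.isIntegral (R := A) g).exists_multiple_integral_of_isLocalization
        (Submonoid.powers t)
    exact ⟨k, by simpa [Submonoid.smul_def, ← hk] using hm⟩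
  -- smul by A₀ preserves integrality
  have smul_int : ∀ (a : A₀) (x : B), IsIntegral A₀ x → IsIntegral A₀ (a • x) := by
    intro a x hx
    rw [Algebra.smul_def]
    exact (isIntegral_algebraMap).mul hx
  -- raising the power of t preserves integrality
  have mono : ∀ (k s : ℕ) (g : B), k ≤ s → IsIntegral A₀ (t ^ k • g) →
      IsIntegral A₀ (t ^ s • g) := by
    intro k s g hks hk
    have : t ^ s • g = t ^ (s - k) • (t ^ k • g) := by
      rw [smul_smul, ← pow_add, Nat.sub_add_cancel hks]
    rw [this]
    exact smul_int _ _ hk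
  -- choose exponents for the generators
  have hGk : ∀ g ∈ G, ∃ k : ℕ, IsIntegral A₀ (t ^ k • g) := fun g _ => key g
  choose kf hkf using hGk
  set s : ℕ := G.attach.sup (fun g => kf g g.2) with hs
  -- uniform integrality on N
  have hN : ∀ y ∈ N, IsIntegral A₀ (t ^ s • y) := by
    intro y hy
    rw [← hG] at hy
    induction hy using Submodule.span_induction with
    | mem g hg =>
        exact mono _ _ _ (Finset.le_sup (f := fun g => kf g.1 g.2)
          (G.mem_attach ⟨g, hg⟩)) (hkf g hg)
    | zero => rw [smul_zero]; exact isIntegral_zero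
    | add x y _ _ hx hy => rw [smul_add]; exact hx.add hy
    | smul a x _ hx =>
        rw [smul_comm]
        exact smul_int a _ hx
  -- conclude: (t*b)^(s+1) is integral
  apply IsIntegral.of_pow (n := s + 1) (Nat.succ_pos s)
  have : (algebraMap A₀ B t * b) ^ (s + 1) = algebraMap A₀ B t * (t ^ s • b ^ (s + 1)) := by
    rw [mul_pow, Algebra.smul_def, map_pow]
    ring
  rw [this]
  exact (isIntegral_algebraMap).mul (hN _ (hbN (s + 1)))
end

section
/- Let A₀ be a commutative ring with a nonzerodivisor t. Assume that A₀ is t-adically separated (⋂_{n≥1} tⁿA₀ = 0) and that there exists an integer c > 0 with t^c·(A₀)*_{A₀[1/t]} ⊆ A₀, where (A₀)*_{A₀[1/t]} is the complete integral closure of A₀ in A₀[1/t] (equivalently, the subring of powerbounded elements of the Tate ring A₀[1/t] is bounded). Then the ring A₀[1/t] is reduced. -/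
/-- Let `A₀` be a commutative ring with a nonzerodivisor `t`.  Assume
`A₀` is `t`-adically separated and there is `c > 0` with
`t^c · (A₀)*_{A₀[1/t]} ⊆ A₀`, where `(A₀)*` is the complete integral closure
(the almost integral elements).  Then `A := A₀[1/t]` is reduced. -/
theorem stmt7 {A₀ A : Type*} [CommRing A₀] [CommRing A] [Algebra A₀ A]
    (t : A₀) (ht : t ∈ nonZeroDivisors A₀) [IsLocalization.Away t A]
    (hsep : ∀ a : A₀, (∀ n : ℕ, 1 ≤ n → a ∈ Ideal.span {t} ^ n) → a = 0)
    (c : ℕ) (hc : 0 < c)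
    (hbd : ∀ b : A, (∃ N : Submodule A₀ A, N.FG ∧ ∀ n : ℕ, b ^ n ∈ N) →
      algebraMap A₀ A t ^ c * b ∈ (algebraMap A₀ A).range) :
    IsReduced A := by
  constructor
  intro b hb
  -- algebraMap t is a unit in A
  have hunit : IsUnit (algebraMap A₀ A t) :=
    IsLocalization.map_units A (⟨t, Submonoid.mem_powers t⟩ : Submonoid.powers t)
  obtain ⟨u, hu⟩ := hunit
  have hinj : Function.Injective (algebraMap A₀ A) :=
    IsLocalization.injective A (Submonoid.powers_le.mpr ht)
  -- any nilpotent element is powerbounded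
  have hpb : ∀ x : A, IsNilpotent x →
      ∃ N : Submodule A₀ A, N.FG ∧ ∀ n : ℕ, x ^ n ∈ N := by
    rintro x ⟨m, hm⟩
    refine ⟨Submodule.span A₀ ((fun i => x ^ i) '' Set.Iic m),
      Submodule.fg_span ((Set.finite_Iic m).image _), fun n => ?_⟩
    by_cases h : n ≤ m
    · exact Submodule.subset_span ⟨n, h, rfl⟩
    · have hx : x ^ n = 0 := pow_eq_zero_of_le (le_of_not_ge h) hm
      rw [hx]; exact Submodule.zero_mem _
  -- for each m, (u⁻¹)^m * b is nilpotent
  have hnil : ∀ m : ℕ, IsNilpotent (((u⁻¹ : Aˣ) : A) ^ m * b) := by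
    intro m
    obtain ⟨k, hk⟩ := hb
    exact ⟨k, by rw [mul_pow, hk, mul_zero]⟩
  -- so t^c * (u⁻¹)^m * b ∈ A₀
  have key : ∀ m : ℕ, ∃ a : A₀,
      algebraMap A₀ A a = algebraMap A₀ A t ^ c * (((u⁻¹ : Aˣ) : A) ^ m * b) := by
    intro m
    obtain ⟨a, ha⟩ := hbd _ (hpb _ (hnil m))
    exact ⟨a, ha⟩
  obtain ⟨a, ha⟩ := key 0
  simp only [pow_zero, one_mul] at ha
  have haz : a = 0 := by
    apply hsep
    intro m _
    obtain ⟨am, ham⟩ := key m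
    rw [Ideal.span_singleton_pow, Ideal.mem_span_singleton]
    refine ⟨am, hinj ?_⟩
    rw [map_mul, map_pow, ham, ha, ← hu]
    rw [mul_left_comm, ← mul_assoc ((u:A)^m), ← mul_pow]
    simp
  -- conclude b = 0
  have : algebraMap A₀ A t ^ c * b = 0 := by rw [← ha, haz, map_zero]
  have hcu : IsUnit (algebraMap A₀ A t ^ c) := ⟨u ^ c, by rw [← hu]; simp⟩
  obtain ⟨v, hv⟩ := hcu
  have := congrArg (fun x => ((v⁻¹ : Aˣ) : A) * x) this
  simp only [mul_zero, ← mul_assoc, hv ▸ (by simp : ((v⁻¹:Aˣ):A) * (v:A) = 1)] at this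
  rwa [one_mul] at this
end

section
/- Fix a prime p. Let A₀ be a commutative ring with a nonzerodivisor t such that p ∈ t^p·A₀. Assume that t lies in the Jacobson radical of A₀ (A₀ is t-adically Zariskian) and that the Frobenius map x ↦ x^p on A₀/(t^p) is surjective (A₀/(t^p) is semiperfect; note p = 0 in A₀/(t^p)). Then there exists a sequence (t_n)_{n≥0} of elements of A₀ with t₀ = t such that for every n ≥ 0 one has t_{n+1}^p = t_n·u_n for some unit u_n ∈ A₀^×. -/
/-- Fix a prime `p`.  Let `A₀` be a commutative ring with a
nonzerodivisor `t` such that `p ∈ t^p · A₀`.  Assume `t` lies in the Jacobson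
radical of `A₀` and the Frobenius `x ↦ x^p` on `A₀/(t^p)` is surjective.  Then
there is a sequence `(t_n)` in `A₀` with `t₀ = t` and `t_{n+1}^p = t_n · u_n`
for units `u_n`. -/
theorem stmt8 (p : ℕ) (hp : p.Prime) {A₀ : Type*} [CommRing A₀]
    (t : A₀) (ht : t ∈ nonZeroDivisors A₀)
    (hpt : (p : A₀) ∈ Ideal.span {t ^ p})
    (hjac : t ∈ Ideal.jacobson (⊥ : Ideal A₀))
    (hfrob : ∀ a : A₀, ∃ b : A₀, a - b ^ p ∈ Ideal.span {t ^ p}) :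
    ∃ ts : ℕ → A₀, ts 0 = t ∧ ∀ n : ℕ, ∃ u : A₀ˣ, ts (n + 1) ^ p = ts n * u := by
  classical
  have hp2 : 2 ≤ p := hp.two_le
  set P : A₀ → Prop := fun s => s ∈ Ideal.jacobson (⊥ : Ideal A₀) ∧ t ^ p ∈ Ideal.span {s ^ p}
    with hP
  have key : ∀ s : {x : A₀ // P x}, ∃ b : {x : A₀ // P x}, ∃ u : A₀ˣ,
      (b : A₀) ^ p = (s : A₀) * u := by
    rintro ⟨s, hs, hts⟩
    obtain ⟨b, hb⟩ := hfrob s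
    have hle : Ideal.span {t ^ p} ≤ Ideal.span {s ^ p} :=
      Ideal.span_le.2 (by simpa using hts)
    obtain ⟨c, hc⟩ := Ideal.mem_span_singleton'.1 (hle hb)
    -- c * s^p = s - b^p
    have hbp : b ^ p = s * (1 - c * s ^ (p - 1)) := by
      have : s ^ p = s * s ^ (p - 1) := by
        rw [← pow_succ']
        congr 1
        omega
      linear_combination hc - c * this
    have hu : IsUnit (1 - c * s ^ (p - 1)) := by
      have := Ideal.mem_jacobson_bot.1 hs (-(c * s ^ (p - 2)))
      have hpow : s * (c * s ^ (p - 2)) = c * s ^ (p - 1) := by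
        rw [mul_comm s, mul_assoc, ← pow_succ]
        congr 2
        omega
      rw [mul_neg, hpow, neg_add_eq_sub] at this
      simpa [sub_eq_neg_add, add_comm] using this
    obtain ⟨u, hu⟩ := hu
    have hbu : b ^ p = s * u := by rw [hbp, hu]
    have hbj : b ∈ Ideal.jacobson (⊥ : Ideal A₀) := by
      have hrad : b ∈ (Ideal.jacobson (⊥ : Ideal A₀)).radical :=
        ⟨p, by rw [hbu]; exact Ideal.mul_mem_right _ _ hs⟩
      exact (Ideal.isRadical_jacobson (⊥ : Ideal A₀)) hrad
    have hsb : s ^ p ∈ Ideal.span {b ^ p} := by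
      have : (s : A₀) = b ^ p * (u⁻¹ : A₀ˣ) := by
        rw [hbu, mul_assoc]; simp
      rw [Ideal.mem_span_singleton]
      refine ⟨b ^ (p * p - p) * ((u⁻¹ : A₀ˣ) : A₀) ^ p, ?_⟩
      have hpp : p ≤ p * p := Nat.le_mul_of_pos_left _ (by omega)
      rw [this, mul_pow, ← pow_mul, ← mul_assoc, ← pow_add]
      congr 2
      omega
    have htb : t ^ p ∈ Ideal.span {b ^ p} := by
      have hle2 : Ideal.span {s ^ p} ≤ Ideal.span {b ^ p} :=
        Ideal.span_le.2 (by simpa using hsb)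
      exact hle2 hts
    exact ⟨⟨b, hbj, htb⟩, u, hbu⟩
  choose F hF using key
  have h0 : P t := ⟨hjac, Ideal.mem_span_singleton_self _⟩
  set g : ℕ → {x : A₀ // P x} := fun n => F^[n] ⟨t, h0⟩ with hg
  refine ⟨fun n => (g n : A₀), by simp [hg], fun n => ?_⟩
  have hstep : g (n + 1) = F (g n) := Function.iterate_succ_apply' F n ⟨t, h0⟩
  show ∃ u : A₀ˣ, ((g (n + 1) : A₀)) ^ p = (g n : A₀) * u
  rw [hstep]
  exact hF (g n)
end

section
/- Fix a prime p. Let A₀ be a commutative ring with a nonzerodivisor ϖ such that p ∈ ϖ^p·A₀ and ϖ admits a p-th root ϖ^{1/p} ∈ A₀ (i.e. (ϖ^{1/p})^p = ϖ). Let (g^{1/pⁿ})_{n≥0} be a compatible system of elements of A₀ with (g^{1/p^{n+1}})^p = g^{1/pⁿ} for all n. Then the following are equivalent: (a) for every n > 0 and every a ∈ A₀ there exists b ∈ A₀ with g^{1/pⁿ}·a ≡ b^p (mod ϖ·A₀); (b) for every n > 0 and every a ∈ A₀ there exists b ∈ A₀ with g^{1/pⁿ}·a ≡ b^p (mod ϖ^p·A₀).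 -/
/-- Fix a prime `p`.  Let `A₀` be a commutative ring with a
nonzerodivisor `ϖ` such that `p ∈ ϖ^p · A₀` and `ϖ` admits a `p`-th root in `A₀`.
Let `(g n)` be a compatible system of `p`-power roots (`g n` plays the role of
`g^{1/pⁿ}`).  Then the Frobenius of `A₀/(ϖ)` is `(g)^{1/p^∞}`-almost surjective
iff the Frobenius of `A₀/(ϖ^p)` is `(g)^{1/p^∞}`-almost surjective. -/
theorem stmt9 (p : ℕ) (hp : p.Prime) {A₀ : Type*} [CommRing A₀]
    (ϖ : A₀) (hϖ : ϖ ∈ nonZeroDivisors A₀)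
    (hpϖ : (p : A₀) ∈ Ideal.span {ϖ ^ p})
    (ϖroot : A₀) (hroot : ϖroot ^ p = ϖ)
    (g : ℕ → A₀) (hg : ∀ n : ℕ, g (n + 1) ^ p = g n) :
    (∀ n : ℕ, 0 < n → ∀ a : A₀, ∃ b : A₀, g n * a - b ^ p ∈ Ideal.span {ϖ}) ↔
      (∀ n : ℕ, 0 < n → ∀ a : A₀, ∃ b : A₀, g n * a - b ^ p ∈ Ideal.span {ϖ ^ p}) := by
  simp only [Ideal.mem_span_singleton] at hpϖ ⊢
  obtain ⟨t, ht⟩ := hpϖ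
  have hp1 : 1 ≤ p := hp.one_lt.le
  constructor
  · intro ha
    -- key claim: for 1 ≤ k ≤ p, ϖ^k almost-divides g(n+1)^k * a - b^p for some b
    have key : ∀ k : ℕ, 1 ≤ k → k ≤ p → ∀ n : ℕ, ∀ a : A₀,
        ∃ b : A₀, ϖ ^ k ∣ g (n + 1) ^ k * a - b ^ p := by
      intro k
      induction k with
      | zero => omega
      | succ k ih =>
        intro _ hkp n a
        rcases Nat.eq_zero_or_pos k with hk0 | hk1
        · subst hk0
          obtain ⟨b, hb⟩ := ha (n + 1) (by omega) a
          exact ⟨b, by simpa using hb⟩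
        · obtain ⟨b, c, hc⟩ : ∃ b c : A₀, g (n + 1) ^ k * a - b ^ p = ϖ ^ k * c := by
            obtain ⟨b, c, hc⟩ := ih hk1 (by omega) n a
            exact ⟨b, c, hc⟩
          obtain ⟨d, e, he⟩ : ∃ d e : A₀, g (n + 1) * c - d ^ p = ϖ * e := by
            obtain ⟨d, hd⟩ := ha (n + 2) (by omega) (g (n + 2) ^ (p - 1) * c)
            refine ⟨d, ?_⟩
            have : g (n + 2) * (g (n + 2) ^ (p - 1) * c) = g (n + 1) * c := by
              rw [← mul_assoc, ← pow_succ']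
              rw [show p - 1 + 1 = p by omega, hg]
            rw [this] at hd
            exact hd
          obtain ⟨r, hr⟩ : ∃ r : A₀, (g (n + 2) * b + ϖroot ^ k * d) ^ p =
              (g (n + 2) * b) ^ p + (ϖroot ^ k * d) ^ p + (p : A₀) * r := by
            obtain ⟨r, hr⟩ := exists_add_pow_prime_eq hp (g (n + 2) * b) (ϖroot ^ k * d)
            exact ⟨g (n + 2) * b * (ϖroot ^ k * d) * r, by rw [hr]; ring⟩
          refine ⟨g (n + 2) * b + ϖroot ^ k * d,
            e - ϖ ^ (p - (k + 1)) * (t * r), ?_⟩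
          have h1 : (g (n + 2) * b) ^ p = g (n + 1) * b ^ p := by
            rw [mul_pow, hg]
          have h2 : (ϖroot ^ k * d) ^ p = ϖ ^ k * d ^ p := by
            rw [mul_pow, ← pow_mul, mul_comm k p, pow_mul, hroot]
          have h3 : ϖ ^ p = ϖ ^ (k + 1) * ϖ ^ (p - (k + 1)) := by
            rw [← pow_add]; congr 1; omega
          calc g (n + 1) ^ (k + 1) * a - (g (n + 2) * b + ϖroot ^ k * d) ^ p
              = g (n + 1) * (g (n + 1) ^ k * a - b ^ p)
                - ϖ ^ k * d ^ p - (p : A₀) * r := by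
                rw [hr, h1, h2]; ring
            _ = ϖ ^ k * (g (n + 1) * c - d ^ p) - ϖ ^ p * t * r := by
                rw [hc, ht]; ring
            _ = ϖ ^ (k + 1) * (e - ϖ ^ (p - (k + 1)) * (t * r)) := by
                rw [he, h3]; ring
    intro n _ a
    obtain ⟨b, hb⟩ := key p hp1 le_rfl n a
    rw [hg n] at hb
    exact ⟨b, hb⟩
  · intro hb n hn a
    obtain ⟨b, c, hc⟩ :=
      (by exact hb n hn a : ∃ b : A₀, ϖ ^ p ∣ g n * a - b ^ p)
    refine ⟨b, c * ϖ ^ (p - 1), ?_⟩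
    have hpp : ϖ ^ p = ϖ * ϖ ^ (p - 1) := by
      rw [← pow_succ']; congr 1; omega
    rw [hc, hpp]; ring
end

section
/- Fix a prime p. Let A₀ be a commutative ring with a nonzerodivisor ϖ such that p ∈ ϖ^p·A₀ and A₀ is integrally closed in A₀[1/ϖ]. Assume A₀ contains compatible systems of p-power roots (ϖ^{1/pⁿ})_{n≥0} and (g^{1/pⁿ})_{n≥0} (i.e. (ϖ^{1/p^{n+1}})^p = ϖ^{1/pⁿ}, ϖ^{1/p⁰} = ϖ, and (g^{1/p^{n+1}})^p = g^{1/pⁿ}). Then the following are equivalent: (a) for every n > 0 and every a ∈ A₀ there exists b ∈ A₀ with g^{1/pⁿ}·a ≡ b^p (mod ϖ^p·A₀); (b) for every n > 0 and every a ∈ A₀ there exists b ∈ A₀ with ϖ^{1/pⁿ}·g^{1/pⁿ}·a ≡ b^p (mod ϖ^p·A₀). -/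
section Aux

variable {R : Type*} [CommRing R]

/-- Refined freshman's dream: the cross terms are divisible by `p * y`. -/
lemma freshman_aux {p : ℕ} (hp : p.Prime) (x y : R) :
    ∃ k : R, (x + y) ^ p = x ^ p + y ^ p + (p : R) * (y * k) := by
  refine ⟨∑ i ∈ Finset.Ioo 0 p, x ^ i * y ^ (p - (i + 1)) * (↑(p.choose i / p) : R), ?_⟩
  have hfac : (∑ i ∈ Finset.Ioo 0 p, x ^ i * y ^ (p - i) * (↑(p.choose i / p) : R))
      = y * ∑ i ∈ Finset.Ioo 0 p, x ^ i * y ^ (p - (i + 1)) * (↑(p.choose i / p) : R) := by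
    rw [Finset.mul_sum]
    apply Finset.sum_congr rfl
    intro i hi
    rw [Finset.mem_Ioo] at hi
    have h1 : p - i = (p - (i + 1)) + 1 := by omega
    rw [h1, pow_succ]
    ring
  rw [add_pow_prime_eq hp]
  have hsum : x * ∑ k ∈ Finset.Ioo 0 p, x ^ (k - 1) * y ^ (p - k - 1) * (↑(p.choose k / p) : R)
      = ∑ i ∈ Finset.Ioo 0 p, x ^ i * y ^ (p - (i + 1)) * (↑(p.choose i / p) : R) := by
    rw [Finset.mul_sum]
    apply Finset.sum_congr rfl
    intro i hi
    rw [Finset.mem_Ioo] at hi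
    obtain ⟨j, rfl⟩ : ∃ j, i = j + 1 := ⟨i - 1, by omega⟩
    rw [show p - (j + 1) - 1 = p - (j + 1 + 1) by omega, Nat.add_sub_cancel, pow_succ x j]
    ring
  rw [← hsum]
  ring

/-- Division by `p`-power roots of `ϖ`, via integral closedness. -/
lemma divroot_aux {A₀ A : Type*} [CommRing A₀] [CommRing A] [Algebra A₀ A]
    (inj : Function.Injective (algebraMap A₀ A))
    (hic : ∀ x : A, IsIntegral A₀ x → x ∈ (algebraMap A₀ A).range)
    {π d Z : A₀} {q : ℕ} (hq : q ≠ 0)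
    (hπ : IsUnit (algebraMap A₀ A π)) (h : d ^ q = π ^ q * Z) :
    ∃ β : A₀, d = π * β ∧ β ^ q = Z := by
  obtain ⟨u, hu⟩ := hπ
  set x : A := (↑u⁻¹ : A) * algebraMap A₀ A d with hx
  have huπ : (↑u⁻¹ : A) * algebraMap A₀ A π = 1 := by
    rw [← hu]; exact u.inv_mul
  have hxq : x ^ q = algebraMap A₀ A Z := by
    have h2 : x ^ q = ((↑u⁻¹ : A) * algebraMap A₀ A π) ^ q * algebraMap A₀ A Z := by
      rw [hx, mul_pow, ← map_pow, h, map_mul, map_pow, mul_pow]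
      ring
    rw [h2, huπ, one_pow, one_mul]
  have hint : IsIntegral A₀ x := by
    refine ⟨Polynomial.X ^ q - Polynomial.C Z, Polynomial.monic_X_pow_sub_C Z hq, ?_⟩
    have h3 : Polynomial.eval₂ (algebraMap A₀ A) x (Polynomial.X ^ q - Polynomial.C Z)
        = x ^ q - algebraMap A₀ A Z := by simp
    rw [h3, hxq, sub_self]
  obtain ⟨β, hβ⟩ := hic x hint
  have hdβ : d = π * β := by
    apply inj
    rw [map_mul, hβ, hx, ← mul_assoc, mul_comm (algebraMap A₀ A π) (↑u⁻¹ : A), huπ, one_mul]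
  refine ⟨β, hdβ, ?_⟩
  apply inj
  rw [map_pow, hβ, hxq]

end Aux

/-- Fix a prime `p`.  Let `A₀` be a commutative ring with a
nonzerodivisor `ϖ` such that `p ∈ ϖ^p · A₀` and `A₀` is integrally closed in
`A := A₀[1/ϖ]`.  Assume `A₀` contains compatible systems of `p`-power roots
`(ϖ n)` of `ϖ` and `(g n)` (so `ϖ n = ϖ^{1/pⁿ}`, `g n = g^{1/pⁿ}`).  Then the
Frobenius of `A₀/(ϖ^p)` is `(g)^{1/p^∞}`-almost surjective iff it is
`(ϖg)^{1/p^∞}`-almost surjective. -/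
theorem stmt10 (p : ℕ) (hp : p.Prime) {A₀ A : Type*} [CommRing A₀] [CommRing A]
    [Algebra A₀ A]
    (ϖs : ℕ → A₀) (hϖnzd : ϖs 0 ∈ nonZeroDivisors A₀)
    (hϖ : ∀ n : ℕ, ϖs (n + 1) ^ p = ϖs n)
    (hpϖ : (p : A₀) ∈ Ideal.span {ϖs 0 ^ p})
    [IsLocalization.Away (ϖs 0) A]
    (hic : ∀ x : A, IsIntegral A₀ x → x ∈ (algebraMap A₀ A).range)
    (g : ℕ → A₀) (hg : ∀ n : ℕ, g (n + 1) ^ p = g n) :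
    (∀ n : ℕ, 0 < n → ∀ a : A₀, ∃ b : A₀,
        g n * a - b ^ p ∈ Ideal.span {ϖs 0 ^ p}) ↔
      (∀ n : ℕ, 0 < n → ∀ a : A₀, ∃ b : A₀,
        ϖs n * g n * a - b ^ p ∈ Ideal.span {ϖs 0 ^ p}) := by
  have hp2 : 2 ≤ p := hp.two_le
  have hppos : 0 < p := hp.pos
  constructor
  · -- easy direction
    intro ha n hn a
    obtain ⟨b, hb⟩ := ha n hn (ϖs n * a)
    refine ⟨b, ?_⟩
    have h1 : g n * (ϖs n * a) = ϖs n * g n * a := by ring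
    rwa [h1] at hb
  · -- hard direction
    intro hb n hn a
    have hle : Submonoid.powers (ϖs 0) ≤ nonZeroDivisors A₀ := by
      rintro x ⟨k, rfl⟩
      exact pow_mem hϖnzd k
    have inj : Function.Injective (algebraMap A₀ A) :=
      IsLocalization.injective (M := Submonoid.powers (ϖs 0)) A hle
    have hunit0 : IsUnit (algebraMap A₀ A (ϖs 0)) :=
      IsLocalization.Away.algebraMap_isUnit (S := A) (x := ϖs 0)
    have htϖ : ∀ k : ℕ, ϖs k ^ (p ^ k) = ϖs 0 := by
      intro k
      induction k with
      | zero => simp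
      | succ k ih =>
        have h1 : p ^ (k + 1) = p * p ^ k := by ring
        rw [h1, pow_mul, hϖ k, ih]
    have hunit : ∀ k : ℕ, IsUnit (algebraMap A₀ A (ϖs k)) := by
      intro k
      have h1 : IsUnit (algebraMap A₀ A (ϖs k) ^ (p ^ k)) := by
        rw [← map_pow, htϖ k]; exact hunit0
      exact (isUnit_pow_iff (pow_pos hppos k).ne').mp h1
    set P : A₀ := ϖs 0 ^ p with hPdef
    obtain ⟨ρ, hρ⟩ : ∃ ρ : A₀, (p : A₀) = P * ρ := by
      rw [Ideal.mem_span_singleton] at hpϖ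
      obtain ⟨ρ, hρ⟩ := hpϖ
      exact ⟨ρ, hρ⟩
    obtain ⟨c₀, hc₀⟩ : ∃ c₀ : A₀, (-1 : A₀) ^ p = -1 + (p : A₀) * c₀ := by
      rcases hp.eq_two_or_odd' with h2 | hodd
      · subst h2
        exact ⟨1, by norm_num⟩
      · exact ⟨0, by rw [hodd.neg_one_pow]; ring⟩
    set q : ℕ := p ^ (n + 1) with hqdef
    have hq1 : 1 ≤ q := Nat.one_le_pow _ _ hppos
    have hq1' : (q - 1) + 1 = q := by omega
    have hpm1 : (p - 1) + 1 = p := by omega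
    have hpm2 : (p - 2) + 1 = p - 1 := by omega
    have hPq : ϖs n ^ q = P := by
      rw [hqdef, pow_succ, pow_mul, htϖ n, hPdef]
    have hPq1 : ϖs (n + 1) ^ q = ϖs 0 := by
      rw [hqdef]; exact htϖ (n + 1)
    -- Step 1: witness for level n+1
    obtain ⟨d, hd⟩ := hb (n + 1) (Nat.succ_pos n) a
    rw [Ideal.mem_span_singleton] at hd
    obtain ⟨e, he⟩ := hd
    have hdp : d ^ p = ϖs (n + 1) * g (n + 1) * a + (-(P * e)) := by
      linear_combination (-1 : A₀) * he
    -- Step 2: d^(p*p) = ϖs n * Z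
    obtain ⟨k₁, hk₁⟩ := freshman_aux hp (ϖs (n + 1) * g (n + 1) * a) (-(P * e))
    have hx0p : (ϖs (n + 1) * g (n + 1) * a) ^ p = ϖs n * (g n * a ^ p) := by
      rw [mul_pow, mul_pow, hϖ n, hg n]
      ring
    have hyp : (-(P * e)) ^ p = (-1 + (p : A₀) * c₀) * (P ^ (p - 2) * P ^ 2 * e ^ p) := by
      rw [neg_pow, hc₀, mul_pow]
      have hPp : P ^ (p - 2) * P ^ 2 = P ^ p := by
        rw [← pow_add]
        congr 1
        omega
      rw [hPp]
    have hP2 : P ^ 2 = ϖs n * (ϖs n ^ (q - 1) * P) := by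
      have h1 : ϖs n ^ (q - 1) * ϖs n = P := by
        rw [← pow_succ, hq1', hPq]
      calc P ^ 2 = (ϖs n ^ (q - 1) * ϖs n) * P := by rw [h1]; ring
        _ = ϖs n * (ϖs n ^ (q - 1) * P) := by ring
    set S : A₀ := (-1 + (p : A₀) * c₀) * (P ^ (p - 2) * e ^ p) - ρ * (e * k₁) with hSdef
    set Z : A₀ := g n * a ^ p + P * (ϖs n ^ (q - 1) * S) with hZdef
    have h0 : d ^ (p * p) = (ϖs (n + 1) * g (n + 1) * a) ^ p + (-(P * e)) ^ p
        + (p : A₀) * ((-(P * e)) * k₁) := by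
      rw [pow_mul, hdp, hk₁]
    have hdpp : d ^ (p * p) = ϖs n * Z := by
      rw [h0, hx0p, hyp, hZdef, hSdef]
      linear_combination ((-1 + (p : A₀) * c₀) * (P ^ (p - 2) * e ^ p) - ρ * (e * k₁)) * hP2
        + (-(P * e * k₁)) * hρ
    -- Step 3: divide by ϖs (n+2)
    have hπpp : ϖs (n + 2) ^ (p * p) = ϖs n := by
      rw [pow_mul, hϖ (n + 1), hϖ n]
    obtain ⟨β, hdβ, hβZ⟩ := divroot_aux inj hic (Nat.mul_ne_zero hppos.ne' hppos.ne')
      (hunit (n + 2)) (show d ^ (p * p) = ϖs (n + 2) ^ (p * p) * Z by rw [hdpp, hπpp])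
    -- Step 4: Frobenius injectivity gives g(n+1)*a - β^p = ϖs 0 * h₁
    have hvp : (β ^ p) ^ p = Z := by
      rw [← pow_mul]; exact hβZ
    have hup : (g (n + 1) * a) ^ p = g n * a ^ p := by
      rw [mul_pow, hg n]
    obtain ⟨k₂, hk₂⟩ := freshman_aux hp (g (n + 1) * a) (-(β ^ p))
    have hnegv : (-(β ^ p)) ^ p = (-1 + (p : A₀) * c₀) * Z := by
      rw [neg_pow, hvp, hc₀]
    set W : A₀ := -(ϖs n ^ (q - 1) * S) + ρ * (c₀ * Z) - ρ * (β ^ p * k₂) with hWdef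
    have hw : (g (n + 1) * a - β ^ p) ^ p = P * W := by
      have h1 : g (n + 1) * a - β ^ p = g (n + 1) * a + (-(β ^ p)) := by ring
      rw [h1, hk₂, hup, hnegv]
      linear_combination (-P) * hWdef + (-1 : A₀) * hZdef + (c₀ * Z - β ^ p * k₂) * hρ
    obtain ⟨h₁, hwh, -⟩ := divroot_aux inj hic hppos.ne' hunit0
      (show (g (n + 1) * a - β ^ p) ^ p = ϖs 0 ^ p * W by rw [← hPdef]; exact hw)
    -- Step 5: assembly
    obtain ⟨c, hcmem⟩ := hb (n + 1) (Nat.succ_pos n) h₁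
    rw [Ideal.mem_span_singleton] at hcmem
    obtain ⟨E₂, hE₂⟩ := hcmem
    have hE₂' : ϖs (n + 1) * g (n + 1) * h₁ = c ^ p + P * E₂ := by
      linear_combination hE₂
    set t : A₀ := ϖs (n + 2) ^ (q - 1) * g (n + 2) ^ (p - 2) with htdef
    set X : A₀ := g (n + 2) ^ (p - 1) * β with hXdef
    set Y : A₀ := t * c with hYdef
    obtain ⟨k₃, hk₃⟩ := freshman_aux hp X Y
    refine ⟨X + Y, ?_⟩
    rw [Ideal.mem_span_singleton]
    refine ⟨t ^ p * E₂ - ρ * (Y * k₃), ?_⟩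
    have hXp : X ^ p = g (n + 1) ^ (p - 1) * β ^ p := by
      rw [hXdef, mul_pow, ← pow_mul, Nat.mul_comm (p - 1) p, pow_mul, hg (n + 1)]
    have htp : t ^ p = ϖs (n + 1) ^ (q - 1) * g (n + 1) ^ (p - 2) := by
      rw [htdef, mul_pow, ← pow_mul, ← pow_mul, Nat.mul_comm (q - 1) p,
        Nat.mul_comm (p - 2) p, pow_mul, pow_mul, hϖ (n + 1), hg (n + 1)]
    have hYp : Y ^ p = t ^ p * c ^ p := by
      rw [hYdef, mul_pow]
    have hgn : g (n + 1) ^ (p - 1) * g (n + 1) = g n := by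
      rw [← pow_succ, hpm1, hg n]
    have hfac : g (n + 1) ^ (p - 1) * ϖs 0 = t ^ p * (ϖs (n + 1) * g (n + 1)) := by
      rw [htp, ← hPq1]
      calc g (n + 1) ^ (p - 1) * ϖs (n + 1) ^ q
          = g (n + 1) ^ ((p - 2) + 1) * ϖs (n + 1) ^ ((q - 1) + 1) := by rw [hpm2, hq1']
        _ = ϖs (n + 1) ^ (q - 1) * g (n + 1) ^ (p - 2) * (ϖs (n + 1) * g (n + 1)) := by
            rw [pow_succ, pow_succ]; ring
    calc g n * a - (X + Y) ^ p
        = g (n + 1) ^ (p - 1) * (g (n + 1) * a) - (X + Y) ^ p := by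
          rw [← hgn]; ring
      _ = g (n + 1) ^ (p - 1) * (β ^ p + ϖs 0 * h₁) - (X + Y) ^ p := by
          linear_combination (g (n + 1) ^ (p - 1)) * hwh
      _ = P * (t ^ p * E₂ - ρ * (Y * k₃)) := by
          rw [hk₃, hXp, hYp]
          have expand : g (n + 1) ^ (p - 1) * (ϖs 0 * h₁)
              = t ^ p * (ϖs (n + 1) * g (n + 1) * h₁) := by
            calc g (n + 1) ^ (p - 1) * (ϖs 0 * h₁)
                = (g (n + 1) ^ (p - 1) * ϖs 0) * h₁ := by ring
              _ = t ^ p * (ϖs (n + 1) * g (n + 1)) * h₁ := by rw [hfac]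
              _ = t ^ p * (ϖs (n + 1) * g (n + 1) * h₁) := by ring
          rw [mul_add, expand, hE₂']
          linear_combination (-(Y * k₃)) * hρ
end

section
/- Fix a prime p. Let A₀ be a p-torsion-free commutative ring such that the Frobenius map x ↦ x^p on A₀/(p) is surjective (A₀ is semiperfect). Let G be a finite group acting on A₀ by ring automorphisms, and assume that |G| is invertible in A₀. Then the ring of invariants A₀^G is also semiperfect, i.e. the Frobenius map on A₀^G/(p·A₀^G) is surjective. -/
/-- Fix a prime `p`.  Let `A₀` be a `p`-torsion-free commutative ring
whose Frobenius `x ↦ x^p` is surjective on `A₀/(p)` (i.e. `A₀` is semiperfect).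
Let a finite group `G` act on `A₀` by ring automorphisms with `|G|` invertible
in `A₀`.  Then the ring of invariants `A₀^G` is semiperfect: every `G`-fixed
element `a` can be written `a = b^p + p·c` with `b, c` `G`-fixed. -/
theorem stmt11 (p : ℕ) (hp : p.Prime) {A₀ : Type*} [CommRing A₀]
    (hptf : ∀ x : A₀, (p : A₀) * x = 0 → x = 0)
    (hsp : ∀ a : A₀, ∃ b : A₀, a - b ^ p ∈ Ideal.span {(p : A₀)})
    (G : Type*) [Group G] [Finite G] [MulSemiringAction G A₀]
    (hinv : IsUnit ((Nat.card G : A₀))) :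
    ∀ a : A₀, (∀ σ : G, σ • a = a) →
      ∃ b c : A₀, (∀ σ : G, σ • b = b) ∧ (∀ σ : G, σ • c = c) ∧
        a = b ^ p + p * c := by
  intro a ha
  haveI := Fintype.ofFinite G
  obtain ⟨u, hu⟩ := hinv
  obtain ⟨b, hb⟩ := hsp a
  have hnat : ∀ (σ : G) (n : ℕ), σ • ((n : A₀)) = (n : A₀) := fun σ n =>
    map_natCast (MulSemiringAction.toRingHom G A₀ σ) n
  set s : A₀ := ∑ σ : G, σ • b with hs
  set b₀ : A₀ := (↑u⁻¹ : A₀) * s with hb₀def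
  have hsfix : ∀ σ : G, σ • s = s := by
    intro σ
    rw [hs, Finset.smul_sum]
    exact Fintype.sum_bijective (σ * ·) (Group.mulLeft_bijective σ) _ _
      (fun τ => (mul_smul σ τ b).symm)
  have huinv : (↑u⁻¹ : A₀) * (Nat.card G : A₀) = 1 := by
    rw [← hu]; exact u.inv_mul
  have hufix : ∀ σ : G, σ • ((↑u⁻¹ : A₀)) = ↑u⁻¹ := by
    intro σ
    have h1 : σ • ((↑u⁻¹ : A₀)) * (Nat.card G : A₀) = 1 := by
      rw [← hnat σ (Nat.card G), ← smul_mul', huinv, smul_one]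
    calc σ • ((↑u⁻¹ : A₀)) = σ • ((↑u⁻¹ : A₀)) * ((Nat.card G : A₀) * ↑u⁻¹) := by
          rw [mul_comm ((Nat.card G : A₀)) _, huinv, mul_one]
      _ = (σ • ((↑u⁻¹ : A₀)) * (Nat.card G : A₀)) * ↑u⁻¹ := by ring
      _ = ↑u⁻¹ := by rw [h1, one_mul]
  have hb₀fix : ∀ σ : G, σ • b₀ = b₀ := fun σ => by
    rw [hb₀def, smul_mul', hufix, hsfix]
  -- the key congruence
  have hkey : a - b₀ ^ p ∈ Ideal.span {(p : A₀)} := by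
    rw [← Ideal.Quotient.eq]
    set I := Ideal.span {(p : A₀)} with hI
    set π := Ideal.Quotient.mk I with hπ
    have hpR : ((p : ℕ) : A₀ ⧸ I) = 0 := by
      rw [← map_natCast π]
      exact Ideal.Quotient.eq_zero_iff_mem.mpr (Ideal.mem_span_singleton_self _)
    obtain ⟨q, hq⟩ := CharP.exists (A₀ ⧸ I)
    have hqp : q ∣ p := (CharP.cast_eq_zero_iff _ q p).mp hpR
    rcases (hp.eq_one_or_self_of_dvd q hqp) with h1 | hqeq
    · -- quotient ring is trivial
      subst h1
      have hone : (1 : A₀ ⧸ I) = 0 := by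
        have h := CharP.cast_eq_zero (A₀ ⧸ I) 1
        rw [Nat.cast_one] at h
        exact h
      have hall : ∀ x : A₀ ⧸ I, x = 0 := fun x => by
        rw [← mul_one x, hone, mul_zero]
      rw [hall (π a), hall (π (b₀ ^ p))]
    · haveI : CharP (A₀ ⧸ I) p := hqeq ▸ hq
      haveI : Fact p.Prime := ⟨hp⟩
      have hπb : π a = π (b ^ p) := Ideal.Quotient.eq.mpr hb
      have hσ : ∀ σ : G, π ((σ • b) ^ p) = π a := by
        intro σ
        have hmem : a - (σ • b) ^ p ∈ I := by
          rw [hI, Ideal.mem_span_singleton] at hb ⊢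
          obtain ⟨d, hd⟩ := hb
          refine ⟨σ • d, ?_⟩
          have h2 : σ • (a - b ^ p) = σ • ((p : A₀) * d) := by rw [hd]
          rw [smul_sub, smul_mul', ha σ, smul_pow', hnat σ p] at h2
          exact h2
        exact (Ideal.Quotient.eq.mpr hmem).symm
      have hA : b₀ - b = (↑u⁻¹ : A₀) * ∑ σ : G, (σ • b - b) := by
        rw [Finset.sum_sub_distrib, Finset.sum_const, mul_sub, hb₀def, ← hs,
          Finset.card_univ, nsmul_eq_mul, ← mul_assoc, ← Nat.card_eq_fintype_card,
          huinv, one_mul]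
      have hzero : (π b₀ - π b) ^ p = 0 := by
        rw [← map_sub, hA, map_mul, mul_pow, map_sum, sum_pow_char]
        have : ∀ σ : G, (π (σ • b - b)) ^ p = 0 := by
          intro σ
          rw [map_sub, sub_pow_char, ← map_pow, ← map_pow, hσ σ, hπb, sub_self]
        rw [Finset.sum_congr rfl (fun σ _ => this σ), Finset.sum_const, smul_zero,
          mul_zero]
      have h3 : (π b₀) ^ p = (π b) ^ p := by
        have := sub_pow_char (p := p) (π b₀) (π b)
        rw [hzero] at this
        linear_combination -this
      rw [map_pow, h3, ← map_pow, hπb]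
  rw [Ideal.mem_span_singleton] at hkey
  obtain ⟨c, hc⟩ := hkey
  have hcfix : ∀ σ : G, σ • c = c := by
    intro σ
    have h1 : (p : A₀) * (σ • c) = (p : A₀) * c := by
      have h2 : σ • ((p : A₀) * c) = σ • (a - b₀ ^ p) := by rw [hc]
      rw [smul_mul', hnat σ p, smul_sub, ha σ, smul_pow', hb₀fix σ] at h2
      exact h2.trans hc
    have h3 : (p : A₀) * (σ • c - c) = 0 := by rw [mul_sub, h1, sub_self]
    exact sub_eq_zero.mp (hptf _ h3)
  exact ⟨b₀, c, hb₀fix, hcfix, by linear_combination hc⟩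
end

section
/- Fix a prime p. Let A₀ be a p-torsion-free Witt-perfect commutative ring that is integrally closed in A₀[1/p]. Let Â₀ be the p-adic completion of A₀, let I₀ := √(pA₀) be the radical of (p) in A₀, and let I₀' := √(pÂ₀) be the radical of (p) in Â₀. Then I₀' = I₀·Â₀ and I₀ = I₀². -/
/-- A `p`-torsion-free commutative ring `R` is Witt-perfect (Davis–Kedlaya
criterion): the Frobenius `x ↦ x^p` on `R/(p)` is surjective and for every
`a ∈ R` there is `b ∈ R` with `b^p ≡ p·a (mod p²R)`. -/
def IsWittPerfect (p : ℕ) (R : Type*) [CommRing R] : Prop :=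
  (∀ x : R, (p : R) * x = 0 → x = 0) ∧
  (∀ a : R, ∃ b : R, a - b ^ p ∈ Ideal.span {(p : R)}) ∧
  (∀ a : R, ∃ b : R, b ^ p - p * a ∈ Ideal.span {(p : R) ^ 2})

/-- Fix a prime `p`.  Let `A₀` be a `p`-torsion-free Witt-perfect
ring that is integrally closed in `A := A₀[1/p]`.  Let `Â₀` (here `C`) be the
`p`-adic completion of `A₀`, `I₀ := √(pA₀)` and `I₀' := √(pÂ₀)`.  Then
`I₀' = I₀·Â₀` and `I₀ = I₀²`. -/
theorem stmt12 (p : ℕ) (hp : p.Prime)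
    {A₀ A C : Type*} [CommRing A₀] [CommRing A] [CommRing C]
    [Algebra A₀ A] [Algebra A₀ C]
    [IsLocalization.Away ((p : A₀)) A]
    (hwp : IsWittPerfect p A₀)
    (hic : ∀ x : A, IsIntegral A₀ x → x ∈ (algebraMap A₀ A).range)
    (hC : IsAdicCompletionMap (p : A₀) (algebraMap A₀ C)) :
    (Ideal.span {(p : C)}).radical =
        Ideal.map (algebraMap A₀ C) (Ideal.span {(p : A₀)}).radical ∧
      (Ideal.span {(p : A₀)}).radical =
        (Ideal.span {(p : A₀)}).radical ^ 2 := by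
  obtain ⟨-, hfrob, hroot⟩ := hwp
  set I : Ideal A₀ := (Ideal.span {(p : A₀)}).radical with hI
  have hpI : (p : A₀) ∈ I := Ideal.le_radical (Ideal.mem_span_singleton_self _)
  have hspan2 : Ideal.span {(p : A₀) ^ 2} ≤ I ^ 2 := by
    rw [← Ideal.span_singleton_pow]
    exact Ideal.pow_right_mono Ideal.le_radical 2
  -- p ∈ I ^ 2
  obtain ⟨b, hb⟩ := hroot 1
  have hb2 : b ^ p ∈ Ideal.span {(p : A₀)} := by
    have hbe : b ^ p = (b ^ p - p * 1) + p * 1 := by ring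
    rw [hbe]
    exact add_mem
      (Ideal.span_singleton_le_span_singleton.mpr ⟨(p : A₀), sq (p : A₀)⟩ hb)
      (Ideal.mul_mem_right _ _ (Ideal.mem_span_singleton_self _))
  have hbI : b ∈ I := Ideal.mem_radical_iff.mpr ⟨p, hb2⟩
  have hpowI2 : ∀ y : A₀, y ∈ I → y ^ p ∈ I ^ 2 := by
    intro y hy
    have hye : y ^ p = y ^ 2 * y ^ (p - 2) := by
      rw [← pow_add]
      congr 1
      have := hp.two_le
      omega
    rw [hye]
    exact Ideal.mul_mem_right _ _ (Ideal.pow_mem_pow hy 2)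
  have hpI2 : (p : A₀) ∈ I ^ 2 := by
    have hpe : (p : A₀) = b ^ p - (b ^ p - p * 1) := by ring
    rw [hpe]
    exact sub_mem (hpowI2 b hbI) (hspan2 hb)
  have hspanI2 : Ideal.span {(p : A₀)} ≤ I ^ 2 :=
    Ideal.span_le.mpr (by simpa using hpI2)
  -- second statement
  have h2 : I = I ^ 2 := by
    refine le_antisymm ?_ (Ideal.pow_le_self two_ne_zero)
    intro x hx
    obtain ⟨y, hy⟩ := hfrob x
    have hyp : y ^ p ∈ I := by
      have hye : y ^ p = x - (x - y ^ p) := by ring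
      rw [hye]
      exact sub_mem hx (Ideal.le_radical hy)
    have hyI : y ∈ I := Ideal.mem_radical_of_pow_mem hyp
    have hxe : x = y ^ p + (x - y ^ p) := by ring
    rw [hxe]
    exact add_mem (hpowI2 y hyI) (hspanI2 hy)
  set ι := algebraMap A₀ C with hι
  have hιp : ι (p : A₀) = (p : C) := map_natCast ι p
  refine ⟨le_antisymm ?_ ?_, h2⟩
  · -- radical (span {(p:C)}) ≤ map ι I
    intro x hx
    obtain ⟨n, hxn⟩ := Ideal.mem_radical_iff.mp hx
    obtain ⟨a, ha⟩ := hC.2.1 1 x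
    rw [pow_one] at ha
    have hmk : Ideal.Quotient.mk (Ideal.span {ι (p : A₀)}) x
        = Ideal.Quotient.mk (Ideal.span {ι (p : A₀)}) (ι a) :=
      (Ideal.Quotient.mk_eq_mk_iff_sub_mem x (ι a)).mpr ha
    have han : ι (a ^ n) ∈ Ideal.span {ι (p : A₀)} ^ 1 := by
      rw [pow_one, map_pow]
      have : Ideal.Quotient.mk (Ideal.span {ι (p : A₀)}) ((ι a) ^ n) = 0 := by
        rw [map_pow, ← hmk, ← map_pow, Ideal.Quotient.eq_zero_iff_mem, hιp]
        exact hxn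
      exact (Ideal.Quotient.eq_zero_iff_mem).mp this
    have haI : a ∈ I := by
      refine Ideal.mem_radical_iff.mpr ⟨n, ?_⟩
      have := hC.2.2 1 (a ^ n) han
      rwa [pow_one] at this
    have hxe : x = ι a + (x - ι a) := by ring
    rw [hxe]
    refine add_mem (Ideal.mem_map_of_mem ι haI) ?_
    have hle : Ideal.span {ι (p : A₀)} ≤ Ideal.map ι I :=
      Ideal.span_le.mpr (by simpa using Ideal.mem_map_of_mem ι hpI)
    exact hle ha
  · -- map ι I ≤ radical (span {(p:C)})
    rw [Ideal.map_le_iff_le_comap]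
    intro x hx
    obtain ⟨n, hxn⟩ := Ideal.mem_radical_iff.mp hx
    refine Ideal.mem_radical_iff.mpr ⟨n, ?_⟩
    rw [Ideal.mem_span_singleton] at hxn ⊢
    have := map_dvd ι hxn
    rwa [map_pow, hιp] at this
end

section
/- Let A₀ be a commutative ring with a nonzerodivisor t, put A := A₀[1/t], and let B be a finite étale A-algebra. Assume that A₀ is integrally closed in A. Then for every element b ∈ B that is integral over A₀, one has Tr_{B/A}(b) ∈ A₀. -/
universe u v

open Polynomial

/-- `AdjoinRoot.of` is injective for a monic polynomial of positive degree. -/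
lemma adjoinRoot_of_injective' {A : Type u} [CommRing A] {g : A[X]} (hg : g.Monic)
    (hdeg : 0 < g.natDegree) : Function.Injective (AdjoinRoot.of g) := by
  cases subsingleton_or_nontrivial A
  · intro a b _; exact Subsingleton.elim a b
  refine (injective_iff_map_eq_zero _).mpr fun a ha => ?_
  have h0 : AdjoinRoot.of g a = AdjoinRoot.mk g (C a) := rfl
  have h1 : AdjoinRoot.modByMonicHom hg (AdjoinRoot.mk g (C a)) = C a %ₘ g :=
    AdjoinRoot.modByMonicHom_mk hg (C a)
  rw [← h0, ha, map_zero] at h1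
  have h2 : C a %ₘ g = C a := by
    rw [Polynomial.modByMonic_eq_self_iff hg]
    exact lt_of_le_of_lt degree_C_le (natDegree_pos_iff_degree_pos.mp hdeg)
  have : C a = (0 : A[X]) := by rw [← h2, ← h1]
  simpa using this

/-- Kronecker-type lemma: coefficients of a monic factor of (the image of) a monic
polynomial over `A₀` are integral over `A₀`. -/
lemma coeff_isIntegralElem_of_monic_factor (A₀ : Type v) [CommRing A₀] :
    ∀ (n : ℕ) (A : Type u) [CommRing A] (φ : A₀ →+* A) (χ ψ : A[X]) (f : A₀[X]),
      f.Monic → χ.Monic → χ.natDegree = n → χ * ψ = f.map φ →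
      ∀ i, φ.IsIntegralElem (χ.coeff i) := by
  intro n
  induction n with
  | zero =>
    intro A _ φ χ ψ f hf hχ hdeg heq i
    have hχ1 : χ = 1 := hχ.natDegree_eq_zero.mp hdeg
    subst hχ1
    rw [coeff_one]
    split_ifs
    · exact φ.isIntegralElem_one
    · exact φ.isIntegralElem_zero
  | succ n ih =>
    intro A _ φ χ ψ f hf hχ hdeg heq i
    cases subsingleton_or_nontrivial A with
    | inl h => exact ⟨X, monic_X, by rw [eval₂_X]; exact Subsingleton.elim _ _⟩
    | inr h => ?_
    set ι := AdjoinRoot.of χ with hι_def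
    have hι : Function.Injective ι := adjoinRoot_of_injective' hχ (by omega)
    set r := AdjoinRoot.root χ with hr_def
    set φ' := ι.comp φ with hφ'
    haveI : Nontrivial (AdjoinRoot χ) := hι.nontrivial
    set χ' := χ.map ι with hχ'def
    have hroot : IsRoot χ' r := AdjoinRoot.isRoot_root χ
    set χ₁ := χ' /ₘ (X - C r) with hχ₁def
    have key : (X - C r) * χ₁ = χ' := mul_divByMonic_eq_iff_isRoot.mpr hroot
    have hχ'm : χ'.Monic := hχ.map ι
    have hχ₁m : χ₁.Monic := (monic_X_sub_C r).of_mul_monic_left (key.symm ▸ hχ'm)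
    have hdeg₁ : χ₁.natDegree = n := by
      have h1 : χ'.natDegree = n + 1 := by rw [hχ'def, hχ.natDegree_map]; exact hdeg
      have h2 : ((X - C r) * χ₁).natDegree = 1 + χ₁.natDegree := by
        rw [(monic_X_sub_C r).natDegree_mul hχ₁m, natDegree_X_sub_C]
      rw [key, h1] at h2
      omega
    have heq' : χ₁ * ((X - C r) * ψ.map ι) = f.map φ' := by
      have h3 := congrArg (Polynomial.map ι) heq
      rw [Polynomial.map_mul, Polynomial.map_map] at h3
      calc χ₁ * ((X - C r) * ψ.map ι) = ((X - C r) * χ₁) * ψ.map ι := by ring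
        _ = χ' * ψ.map ι := by rw [key]
        _ = f.map φ' := h3
    have hint₁ : ∀ j, φ'.IsIntegralElem (χ₁.coeff j) :=
      ih _ φ' χ₁ _ f hf hχ₁m hdeg₁ heq'
    have hr : φ'.IsIntegralElem r := by
      refine ⟨f, hf, ?_⟩
      have h4 : eval r (f.map φ') = 0 := by
        rw [← heq']
        simp [eval_mul]
      rwa [eval_map] at h4
    have hχcoeff : ∀ k, ι (χ.coeff k) =
        (if k = 0 then 0 else χ₁.coeff (k - 1)) - r * χ₁.coeff k := by
      intro k
      have h5 : ι (χ.coeff k) = χ'.coeff k := (coeff_map ι k).symm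
      rw [h5, ← key, sub_mul, coeff_sub, coeff_C_mul]
      congr 1
      cases k with
      | zero => simp [mul_coeff_zero]
      | succ k => simp [coeff_X_mul]
    have hint : φ'.IsIntegralElem (ι (χ.coeff i)) := by
      rw [hχcoeff]
      refine RingHom.IsIntegralElem.sub _ ?_ (hr.mul _ (hint₁ i))
      split_ifs
      · exact φ'.isIntegralElem_zero
      · exact hint₁ _
    obtain ⟨g, hg, hg0⟩ := hint
    refine ⟨g, hg, hι ?_⟩
    rw [Polynomial.hom_eval₂, map_zero]
    exact hg0

open Polynomial

lemma charpoly_dvd_pow_of_aeval_eq_zero' {R : Type u} [CommRing R] {n : Type*} [Fintype n]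
    [DecidableEq n] (M : Matrix n n R) (p : R[X]) (hp : Polynomial.aeval M p = 0) :
    M.charpoly ∣ p ^ Fintype.card n := by
  -- In `(R[X])[X]`, `(X - C X) ∣ p.map C - C p`.
  have hroot : IsRoot (p.map (C : R →+* R[X]) - C p) (X : R[X]) := by
    simp [IsRoot, eval_map, eval₂_C_X]
  obtain ⟨W, hW⟩ := dvd_iff_isRoot.mpr hroot
  -- push forward along `aeval M : R[X] →+* Matrix n n R`
  have hW2 : p.map (algebraMap R (Matrix n n R)) =
      (X - C M) * W.map (Polynomial.aeval M : R[X] →ₐ[R] Matrix n n R).toRingHom := by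
    have h3 := congrArg
      (Polynomial.map ((Polynomial.aeval M : R[X] →ₐ[R] Matrix n n R).toRingHom)) hW
    rw [Polynomial.map_sub, Polynomial.map_mul, Polynomial.map_sub, Polynomial.map_X,
      Polynomial.map_C, Polynomial.map_C, Polynomial.map_map] at h3
    have h4 : ((Polynomial.aeval M : R[X] →ₐ[R] Matrix n n R).toRingHom).comp
        (C : R →+* R[X]) = algebraMap R (Matrix n n R) := by
      ext x
      simp
    have h5 : (Polynomial.aeval M : R[X] →ₐ[R] Matrix n n R).toRingHom (X : R[X]) = M := by
      simp
    have h6 : (Polynomial.aeval M : R[X] →ₐ[R] Matrix n n R).toRingHom p = 0 := hp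
    rw [h4, h5, h6, map_zero, sub_zero] at h3
    exact h3
  have h5 : (p • (1 : Matrix n n R[X])) =
      (Matrix.charmatrix M) * (matPolyEquiv.symm
        (W.map (Polynomial.aeval M : R[X] →ₐ[R] Matrix n n R).toRingHom)) := by
    apply matPolyEquiv.injective
    rw [map_mul, matPolyEquiv_smul_one, Matrix.matPolyEquiv_charmatrix,
      AlgEquiv.apply_symm_apply]
    exact hW2
  have h6 := congrArg Matrix.det h5
  rw [Matrix.det_mul, Matrix.det_smul, Matrix.det_one, mul_one] at h6
  exact ⟨_, h6⟩

open Polynomial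

/-- Let `A₀` be a commutative ring with a nonzerodivisor `t`, put
`A := A₀[1/t]`, and let `B` be a finite étale `A`-algebra.  Assume `A₀` is
integrally closed in `A`.  Then for every `b ∈ B` integral over `A₀`, the trace
`Tr_{B/A}(b)` lies in (the image of) `A₀`. -/
theorem stmt13 {A₀ A B : Type u} [CommRing A₀] [CommRing A] [CommRing B]
    [Algebra A₀ A] [Algebra A B] [Algebra A₀ B] [IsScalarTower A₀ A B]
    (t : A₀) (ht : t ∈ nonZeroDivisors A₀) [IsLocalization.Away t A]
    [Module.Finite A B] [Algebra.Etale A B]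
    (hic : ∀ x : A, IsIntegral A₀ x → x ∈ (algebraMap A₀ A).range)
    (b : B) (hb : IsIntegral A₀ b) :
    Algebra.trace A B b ∈ (algebraMap A₀ A).range := by
  by_cases H : ∃ s : Finset B, Nonempty (Module.Basis s A B)
  · obtain ⟨s, ⟨c⟩⟩ := H
    haveI := Classical.decEq B
    cases isEmpty_or_nonempty (↥(s : Finset B)) with
    | inl h =>
      refine ⟨0, ?_⟩
      rw [map_zero, Algebra.trace_eq_matrix_trace c b, Matrix.trace]
      rw [Finset.univ_eq_empty, Finset.sum_empty]
    | inr h =>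
      obtain ⟨q, hq, hq0⟩ := hb
      set φ := algebraMap A₀ A with hφ
      set M := Algebra.leftMulMatrix c b with hM
      have haev : Polynomial.aeval M (q.map φ) = 0 := by
        rw [Polynomial.aeval_algHom_apply (Algebra.leftMulMatrix c) b (q.map φ),
          Polynomial.aeval_map_algebraMap]
        have : Polynomial.aeval b q = 0 := by rw [aeval_def]; exact hq0
        rw [this, map_zero]
      obtain ⟨ψ, hψ⟩ := charpoly_dvd_pow_of_aeval_eq_zero' M (q.map φ) haev
      have hψm : ψ.Monic := (Matrix.charpoly_monic M).of_mul_monic_left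
        (by rw [← hψ]; exact (hq.map φ).pow _)
      have heqf : M.charpoly * ψ = (q ^ Fintype.card ↥(s : Finset B)).map φ := by
        rw [← hψ, Polynomial.map_pow]
      have hint := coeff_isIntegralElem_of_monic_factor A₀ M.charpoly.natDegree A φ
        M.charpoly ψ (q ^ Fintype.card ↥(s : Finset B)) (hq.pow _)
        (Matrix.charpoly_monic M) rfl heqf
      have htr : Algebra.trace A B b =
          -M.charpoly.coeff (Fintype.card ↥(s : Finset B) - 1) := by
        rw [Algebra.trace_eq_matrix_trace c b, Matrix.trace_eq_neg_charpoly_coeff]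
      apply hic
      rw [htr]
      exact (hint _).neg
  · refine ⟨0, ?_⟩
    rw [map_zero, Algebra.trace_eq_zero_of_not_exists_basis A H, LinearMap.zero_apply]
end

section
/- Let A₀ be a commutative ring with a nonzerodivisor t such that the pair (A₀,(t)) is preuniform, and let A₀ ↪ B₀ be an integral ring extension such that B₀ is t-torsion free. Then the induced map Â₀ → B̂₀ between t-adic completions is injective (and B̂₀ is t-torsion free). -/
/-- An element of a ring lies in `I^n • ⊤` iff it lies in `I^n`. -/
lemma mem_smul_top_iff_ring {R : Type*} [CommRing R] (I : Ideal R) (x : R) :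
    x ∈ (I • (⊤ : Submodule R R)) ↔ x ∈ I := by
  rw [smul_eq_mul, Ideal.mul_top]

/-- Let `(A₀,(t))` be a preuniform pair (`t` a nonzerodivisor with
`t^c · (A₀)⁺_{A₀[1/t]} ⊆ A₀` for some `c > 0`), and let `A₀ ↪ B₀` be an integral
ring extension with `B₀` `t`-torsion free.  Then the induced map `Â₀ → B̂₀` of
`t`-adic completions is injective, and `B̂₀` is `t`-torsion free. -/
theorem stmt19 {A₀ B₀ A C D : Type*}
    [CommRing A₀] [CommRing B₀] [CommRing A] [CommRing C] [CommRing D]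
    [Algebra A₀ A] [Algebra A₀ B₀] [Algebra A₀ C] [Algebra B₀ D] [Algebra C D]
    [Algebra A₀ D] [IsScalarTower A₀ B₀ D] [IsScalarTower A₀ C D]
    (t : A₀) (ht : t ∈ nonZeroDivisors A₀)
    [IsLocalization.Away t A]
    (hpreuni : ∃ c : ℕ, 0 < c ∧ ∀ x : A, IsIntegral A₀ x →
      algebraMap A₀ A t ^ c * x ∈ (algebraMap A₀ A).range)
    (hinj : Function.Injective (algebraMap A₀ B₀))
    (hint : Algebra.IsIntegral A₀ B₀)
    (htf : ∀ x : B₀, algebraMap A₀ B₀ t * x = 0 → x = 0)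
    (hC : IsAdicCompletionMap t (algebraMap A₀ C))
    (hD : IsAdicCompletionMap (algebraMap A₀ B₀ t) (algebraMap B₀ D)) :
    Function.Injective (algebraMap C D) ∧
      ∀ x : D, algebraMap A₀ D t * x = 0 → x = 0 := by
  obtain ⟨c, hc0, hcint⟩ := hpreuni
  set f := algebraMap A₀ B₀ with hf
  set g := algebraMap B₀ D with hg
  set ιA := algebraMap A₀ A with hιA
  set ιC := algebraMap A₀ C with hιC
  have hpow : Submonoid.powers t ≤ nonZeroDivisors A₀ := by
    rintro x ⟨k, rfl⟩; exact pow_mem ht k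
  have hιAinj : Function.Injective ιA := IsLocalization.injective A hpow
  have htA : IsUnit (ιA t) :=
    IsLocalization.map_units A (⟨t, 1, pow_one t⟩ : Submonoid.powers t)
  -- key lemma: if f a ∈ (f t)^(n+c) B₀ then a ∈ t^n A₀
  have key : ∀ (n : ℕ) (a : A₀), f a ∈ Ideal.span {f t} ^ (n + c) →
      a ∈ Ideal.span {t} ^ n := by
    intro n a ha
    rw [Ideal.span_singleton_pow, Ideal.mem_span_singleton'] at ha
    obtain ⟨b, hb⟩ := ha
    -- b is integral over A₀
    obtain ⟨p, hpmonic, hpb⟩ := hint.isIntegral b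
    set N := n + c
    -- a is a root of the monic polynomial scaleRoots p (t^N)
    have hq : Polynomial.eval a (p.scaleRoots (t ^ N)) = 0 := by
      apply hinj
      rw [map_zero, ← Polynomial.eval₂_at_apply]
      have : f a = f (t ^ N) * b := by rw [map_pow, ← hb, mul_comm]
      rw [this]
      exact Polynomial.scaleRoots_eval₂_eq_zero f hpb
    -- let x = a / t^N in A; then x is a root of p, hence integral over A₀
    set x : A := IsLocalization.mk' A a (⟨t ^ N, N, rfl⟩ : Submonoid.powers t)
    have hx : ιA (t ^ N) * x = ιA a := by
      rw [mul_comm]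
      exact IsLocalization.mk'_spec A a (⟨t ^ N, N, rfl⟩ : Submonoid.powers t)
    have hxint : IsIntegral A₀ x := by
      refine ⟨p, hpmonic, ?_⟩
      have h0 : Polynomial.eval₂ ιA (ιA (t ^ N) * x) (p.scaleRoots (t ^ N)) = 0 := by
        rw [hx, Polynomial.eval₂_at_apply, hq, map_zero]
      rw [Polynomial.scaleRoots_eval₂_mul] at h0
      have hu : IsUnit (ιA (t ^ N) ^ p.natDegree) := by
        rw [map_pow]; exact (htA.pow N).pow p.natDegree
      exact (hu.mul_right_eq_zero).mp h0
    obtain ⟨a₀, ha₀⟩ := hcint x hxint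
    -- t^N * a₀ = t^c * a in A₀
    have heq : t ^ N * a₀ = t ^ c * a := by
      apply hιAinj
      have : ιA (t ^ N * a₀) = ιA t ^ c * (ιA (t ^ N) * x) := by
        rw [map_mul, ha₀]; ring
      rw [this, hx, map_mul, map_pow]
    have : t ^ c * (t ^ n * a₀) = t ^ c * a := by
      rw [← heq, show N = n + c from rfl, pow_add]; ring
    have ha : a = t ^ n * a₀ :=
      ((mul_cancel_left_mem_nonZeroDivisors (pow_mem ht c)).mp this).symm
    rw [Ideal.span_singleton_pow, Ideal.mem_span_singleton']
    exact ⟨a₀, by rw [mul_comm, ← ha]⟩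
  -- the generator of the ideal in D, from two sides
  have hgen : algebraMap C D (ιC t) = g (f t) := by
    rw [hιC, ← IsScalarTower.algebraMap_apply, hg, hf, ← IsScalarTower.algebraMap_apply]
  have hmapC : ∀ (n : ℕ) (y : C), y ∈ Ideal.span {ιC t} ^ n →
      algebraMap C D y ∈ Ideal.span {g (f t)} ^ n := by
    intro n y hy
    rw [Ideal.span_singleton_pow, Ideal.mem_span_singleton'] at hy ⊢
    obtain ⟨z, hz⟩ := hy
    exact ⟨algebraMap C D z, by rw [← hz, map_mul, map_pow, hgen]⟩
  -- injectivity
  constructor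
  · rw [injective_iff_map_eq_zero]
    intro x hx0
    have hCx : ∀ m : ℕ, x ∈ Ideal.span {ιC t} ^ m := by
      intro m
      obtain ⟨a, hasub⟩ := hC.2.1 (m + c) x
      -- image of a in B₀ lies in (f t)^(m+c)
      have hfa : f a ∈ Ideal.span {f t} ^ (m + c) := by
        apply hD.2.2
        have h1 : algebraMap C D (x - ιC a) ∈ Ideal.span {g (f t)} ^ (m + c) :=
          hmapC _ _ hasub
        have h2 : algebraMap C D (ιC a) = g (f a) := by
          rw [hιC, ← IsScalarTower.algebraMap_apply, hg, hf,
            ← IsScalarTower.algebraMap_apply]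
        rw [map_sub, hx0, zero_sub, h2] at h1
        simpa using (Ideal.span {g (f t)} ^ (m + c)).neg_mem h1
      have haA : a ∈ Ideal.span {t} ^ m := key m a hfa
      -- so ιC a ∈ (ιC t)^m, and x = (x - ιC a) + ιC a ∈ (ιC t)^m
      have h3 : ιC a ∈ Ideal.span {ιC t} ^ m := by
        rw [Ideal.span_singleton_pow, Ideal.mem_span_singleton'] at haA ⊢
        obtain ⟨y, hy⟩ := haA
        exact ⟨ιC y, by rw [← hy, map_mul, map_pow]⟩
      have h4 : x - ιC a ∈ Ideal.span {ιC t} ^ m :=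
        Ideal.pow_le_pow_right (Nat.le_add_right m c) hasub
      simpa using (Ideal.span {ιC t} ^ m).add_mem h4 h3
    have haus : IsHausdorff (Ideal.span {ιC t}) C := hC.1.toIsHausdorff
    apply haus.haus
    intro n
    rw [SModEq.zero, mem_smul_top_iff_ring]
    exact hCx n
  · -- torsion-freeness of D
    intro x hx
    have hxg : g (f t) * x = 0 := by
      rw [← hx, hg, hf, ← IsScalarTower.algebraMap_apply]
    have hDx : ∀ n : ℕ, x ∈ Ideal.span {g (f t)} ^ n := by
      intro n
      obtain ⟨b, hbsub⟩ := hD.2.1 n x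
      have h1 : g (f t) * (x - g b) ∈ Ideal.span {g (f t)} ^ (n + 1) := by
        rw [pow_succ, mul_comm (g (f t))]
        exact Ideal.mul_mem_mul hbsub (Ideal.mem_span_singleton_self _)
      have h2 : g (f t * b) ∈ Ideal.span {g (f t)} ^ (n + 1) := by
        have : g (f t * b) = -(g (f t) * (x - g b)) + g (f t) * x := by
          rw [map_mul]; ring
        rw [this, hxg, add_zero]
        exact (Ideal.span {g (f t)} ^ (n + 1)).neg_mem h1
      have h3 : f t * b ∈ Ideal.span {f t} ^ (n + 1) := hD.2.2 _ _ h2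
      rw [Ideal.span_singleton_pow, Ideal.mem_span_singleton'] at h3
      obtain ⟨y, hy⟩ := h3
      have hb : b = y * f t ^ n := by
        have h0 : f t * (b - y * f t ^ n) = 0 := by
          rw [pow_succ] at hy; rw [mul_sub, ← hy]; ring
        have := htf _ h0
        rw [sub_eq_zero] at this; exact this
      have h4 : g b ∈ Ideal.span {g (f t)} ^ n := by
        rw [Ideal.span_singleton_pow, Ideal.mem_span_singleton']
        exact ⟨g y, by rw [hb, map_mul, map_pow]⟩
      simpa using (Ideal.span {g (f t)} ^ n).add_mem hbsub h4
    have haus : IsHausdorff (Ideal.span {g (f t)}) D := hD.1.toIsHausdorff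
    apply haus.haus
    intro n
    rw [SModEq.zero, mem_smul_top_iff_ring]
    exact hDx n
end
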